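/- arXiv:2310.10946 — 4 statements merged into one kernel-verified Lean document; each statement's English description precedes it below -/
import Mathlib

section
/- Let X ⊆ ℝ^d be a nonempty compact convex set with ‖x − y‖₂ ≤ D for all x, y ∈ X, let F > 0, d ≥ 1, c ∈ [1/2, 1), ε > 0, and let T be a positive integer. For each t = 1, …, T let h_t : ℝ^d → ℝ be convex, differentiable, and Lipschitz continuous with constant 3Fd on X, let g : ℝ^d → ℝ be convex on X, and suppose x* ∈ X satisfies g(x*) ≤ 0. Let x_1 ∈ X, and for each t let λ_t ≥ t^c, γ_t := t^{c+ε}, α_t := t^c, and let x_{t+1} be the minimizer over X of x ↦ h_t(x_t) + ⟨∇h_t(x_t), x − x_t⟩ + λ_t γ_t·max{g(x), 0} + (α_t/2)‖x − x_t‖₂². Then ∑_{t=1}^{T} max{g(x_{t+1}), 0} ≤ 27F²d²/4 + 3FdD(1+ε)/ε + D². -/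
open RealInnerProductSpace Topology

set_option maxHeartbeats 1000000

section AuxLemmas

open Set Filter

variable {E : Type*} [NormedAddCommGroup E] [InnerProductSpace ℝ E] [CompleteSpace E]

/-- If `f` is differentiable at `w ∈ X` and `K`-Lipschitz on the convex set `X`, then for any
`y, z ∈ X` we have `⟪∇f(w), y - z⟫ ≤ K‖y - z‖`. -/
lemma grad_pair_bound {X : Set E} (hX : Convex ℝ X) {f : E → ℝ} {K : ℝ}
    {w y z : E} (hw : w ∈ X) (hy : y ∈ X) (hz : z ∈ X)
    (hdf : DifferentiableAt ℝ f w)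
    (hlip : ∀ p ∈ X, ∀ q ∈ X, |f p - f q| ≤ K * ‖p - q‖) :
    ⟪gradient f w, y - z⟫ ≤ K * ‖y - z‖ := by
  have hfd := hdf.hasGradientAt.hasFDerivAt
  have hcurve : ∀ v : E, HasDerivAt (fun s : ℝ => w + s • v) v 0 := by
    intro v
    simpa using ((hasDerivAt_id (0 : ℝ)).smul_const v).const_add w
  have hcomp : ∀ v : E, HasDerivAt (fun s : ℝ => f (w + s • v))
      (InnerProductSpace.toDual ℝ E (gradient f w) v) 0 := by
    intro v
    have h9 : HasFDerivAt f (InnerProductSpace.toDual ℝ E (gradient f w))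
        ((fun s : ℝ => w + s • v) 0) := by simpa using hfd
    exact h9.comp_hasDerivAt 0 (hcurve v)
  set FF : ℝ → ℝ := fun s => f (w + s • (y - w)) - f (w + s • (z - w)) with hFF
  have hFd : HasDerivAt FF (⟪gradient f w, y - z⟫) 0 := by
    have := (hcomp (y - w)).sub (hcomp (z - w))
    have hval : InnerProductSpace.toDual ℝ E (gradient f w) (y - w)
        - InnerProductSpace.toDual ℝ E (gradient f w) (z - w)
        = ⟪gradient f w, y - z⟫ := by
      rw [← map_sub, show (y - w) - (z - w) = y - z by abel,
        InnerProductSpace.toDual_apply_apply]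
    rwa [hval] at this
  have htend : Tendsto (slope FF 0) (𝓝[>] 0) (𝓝 (⟪gradient f w, y - z⟫)) := by
    refine (hasDerivAt_iff_tendsto_slope.mp hFd).mono_left (nhdsWithin_mono 0 ?_)
    exact fun s hs => Set.mem_compl_singleton_iff.mpr (ne_of_gt hs)
  refine le_of_tendsto htend ?_
  filter_upwards [Ioc_mem_nhdsGT zero_lt_one] with s hs
  obtain ⟨hs0, hs1⟩ := hs
  have hyX : w + s • (y - w) ∈ X := hX.add_smul_sub_mem hw hy ⟨hs0.le, hs1⟩
  have hzX : w + s • (z - w) ∈ X := hX.add_smul_sub_mem hw hz ⟨hs0.le, hs1⟩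
  have hdiffpt : (w + s • (y - w)) - (w + s • (z - w)) = s • (y - z) := by
    simp only [smul_sub]
    abel
  have hFs : FF s ≤ K * (s * ‖y - z‖) := by
    calc FF s ≤ |FF s| := le_abs_self _
      _ ≤ K * ‖(w + s • (y - w)) - (w + s • (z - w))‖ := hlip _ hyX _ hzX
      _ = K * (s * ‖y - z‖) := by
          rw [hdiffpt, norm_smul, Real.norm_eq_abs, abs_of_pos hs0]
  have hF0 : FF 0 = 0 := by simp [hFF]
  rw [slope_def_field, hF0, sub_zero, sub_zero, div_le_iff₀ hs0]
  nlinarith [hFs]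

/-- MVT step: `(n+1)^{-(1+ε)} ≤ (n^{-ε} - (n+1)^{-ε})/ε`. -/
lemma rpow_step {ε : ℝ} (hε : 0 < ε) {n : ℕ} (hn : 1 ≤ n) :
    ((n : ℝ) + 1) ^ (-(1 + ε)) ≤ ((n : ℝ) ^ (-ε) - ((n : ℝ) + 1) ^ (-ε)) / ε := by
  have ha : (1 : ℝ) ≤ (n : ℝ) := by exact_mod_cast hn
  have hab : (n : ℝ) < (n : ℝ) + 1 := by linarith
  obtain ⟨ξ, hξ, hs⟩ := exists_hasDerivAt_eq_slope (fun y : ℝ => y ^ (-ε))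
      (fun y : ℝ => (-ε) * y ^ (-ε - 1)) hab
      (fun y hy => by
        have hy0 : y ≠ 0 := by
          have := hy.1; nlinarith
        exact (Real.continuousAt_rpow_const y (-ε) (Or.inl hy0)).continuousWithinAt)
      (fun y hy => by
        have hy0 : y ≠ 0 := by
          have := hy.1; nlinarith
        exact Real.hasDerivAt_rpow_const (Or.inl hy0))
  have hd1 : (n : ℝ) + 1 - (n : ℝ) = 1 := by ring
  rw [hd1, div_one] at hs
  have hξpos : 0 < ξ := by nlinarith [hξ.1]
  have hkey : ((n : ℝ) + 1) ^ (-ε - 1) ≤ ξ ^ (-ε - 1) := by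
    have e1 : ∀ x : ℝ, 0 ≤ x → x ^ (-ε - 1) = (x ^ (ε + 1))⁻¹ := by
      intro x hx
      rw [show -ε - 1 = -(ε + 1) by ring, Real.rpow_neg hx]
    rw [e1 _ (by linarith), e1 _ hξpos.le]
    exact inv_anti₀ (Real.rpow_pos_of_pos hξpos _)
      (Real.rpow_le_rpow hξpos.le hξ.2.le (by linarith))
  have h8 : (n : ℝ) ^ (-ε) - ((n : ℝ) + 1) ^ (-ε) = ε * ξ ^ (-ε - 1) := by
    nlinarith [hs]
  rw [h8, mul_div_cancel_left₀ _ (ne_of_gt hε), show -(1 + ε) = -ε - 1 by ring]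
  exact hkey

/-- `∑_{t=1}^T t^{-(1+ε)} ≤ 1 + (1 - T^{-ε})/ε`. -/
lemma sum_rpow_le {ε : ℝ} (hε : 0 < ε) :
    ∀ T : ℕ, 1 ≤ T →
      ∑ t ∈ Finset.Icc 1 T, ((t : ℝ)) ^ (-(1 + ε)) ≤ 1 + (1 - (T : ℝ) ^ (-ε)) / ε := by
  intro T hT
  induction T, hT using Nat.le_induction with
  | base => simp [Finset.Icc_self, Real.one_rpow]
  | succ n hn ih =>
    rw [Finset.sum_Icc_succ_top (by omega)]
    have hstep := rpow_step hε hn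
    have hsplit : (1 - ((n : ℝ) + 1) ^ (-ε)) / ε
        = (1 - (n : ℝ) ^ (-ε)) / ε + ((n : ℝ) ^ (-ε) - ((n : ℝ) + 1) ^ (-ε)) / ε := by
      ring
    push_cast
    rw [hsplit]
    linarith

/-- Telescoping sum with decreasing nonnegative coefficients. -/
lemma telescope_sum {β A : ℕ → ℝ} (hβmono : ∀ t, 1 ≤ t → β (t + 1) ≤ β t)
    (hA0 : ∀ t, 0 ≤ A t) :
    ∀ T : ℕ, 1 ≤ T →
      ∑ t ∈ Finset.Icc 1 T, β t * (A t - A (t + 1)) ≤ β 1 * A 1 - β (T + 1) * A (T + 1) := by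
  intro T hT
  induction T, hT using Nat.le_induction with
  | base =>
    simp only [Finset.Icc_self, Finset.sum_singleton]
    nlinarith [mul_le_mul_of_nonneg_right (hβmono 1 le_rfl) (hA0 2)]
  | succ n hn ih =>
    rw [Finset.sum_Icc_succ_top (by omega)]
    nlinarith [mul_le_mul_of_nonneg_right (hβmono (n + 1) (by omega)) (hA0 (n + 2))]

end AuxLemmas

/-- Deterministic hard-constraint violation bound (convex case, fixed
constraint, Theorem 1): with `λ_t ≥ t^c`, `γ_t = t^{c+ε}`, `α_t = t^c`,
`∑_{t=1}^T [g(x_{t+1})]₊ ≤ 27F²d²/4 + 3FdD(1+ε)/ε + D²`. -/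
theorem violation_bound_convex_fixed
    {d : ℕ} (hd : 1 ≤ d)
    (X : Set (EuclideanSpace ℝ (Fin d)))
    (hne : X.Nonempty) (hcomp : IsCompact X) (hX : Convex ℝ X)
    (D : ℝ) (hD : ∀ x ∈ X, ∀ y ∈ X, ‖x - y‖ ≤ D)
    (F : ℝ) (hF : 0 < F)
    (c ε : ℝ) (hc₁ : 1 / 2 ≤ c) (hc₂ : c < 1) (hε : 0 < ε)
    (T : ℕ) (hT : 1 ≤ T)
    (h : ℕ → EuclideanSpace ℝ (Fin d) → ℝ)
    (hconv : ∀ t ∈ Finset.Icc 1 T, ConvexOn ℝ X (h t))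
    (hdiff : ∀ t ∈ Finset.Icc 1 T, ∀ x ∈ X, DifferentiableAt ℝ (h t) x)
    (hlip : ∀ t ∈ Finset.Icc 1 T, ∀ x ∈ X, ∀ y ∈ X,
      |h t x - h t y| ≤ 3 * F * (d : ℝ) * ‖x - y‖)
    (g : EuclideanSpace ℝ (Fin d) → ℝ) (hg : ConvexOn ℝ X g)
    (xs : EuclideanSpace ℝ (Fin d)) (hxs : xs ∈ X) (hgxs : g xs ≤ 0)
    (x : ℕ → EuclideanSpace ℝ (Fin d)) (hx1 : x 1 ∈ X)
    (lam γ : ℕ → ℝ)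
    (hlam : ∀ t ∈ Finset.Icc 1 T, (t : ℝ) ^ c ≤ lam t)
    (hγ : ∀ t ∈ Finset.Icc 1 T, γ t = (t : ℝ) ^ (c + ε))
    (hupd : ∀ t ∈ Finset.Icc 1 T, x (t + 1) ∈ X ∧
      IsMinOn (fun z => h t (x t) + ⟪gradient (h t) (x t), z - x t⟫
        + lam t * γ t * max (g z) 0 + (t : ℝ) ^ c / 2 * ‖z - x t‖ ^ 2) X (x (t + 1))) :
    (∑ t ∈ Finset.Icc 1 T, max (g (x (t + 1))) 0) ≤
      27 * F ^ 2 * (d : ℝ) ^ 2 / 4 + 3 * F * (d : ℝ) * D * (1 + ε) / ε + D ^ 2 := by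
  have hd1 : (1 : ℝ) ≤ (d : ℝ) := by exact_mod_cast hd
  have hD0 : 0 ≤ D := by simpa using hD xs hxs xs hxs
  have ha0 : 0 ≤ 3 * F * (d : ℝ) := by nlinarith
  have haD0 : 0 ≤ 3 * F * (d : ℝ) * D := by nlinarith
  -- all iterates are in X
  have hmemX : ∀ t : ℕ, 1 ≤ t → t ≤ T + 1 → x t ∈ X := by
    intro t
    induction t with
    | zero => intro h1 _; omega
    | succ n ih =>
      intro h1 h2
      rcases Nat.eq_zero_or_pos n with rfl | hn
      · exact hx1
      · exact (hupd n (Finset.mem_Icc.mpr ⟨hn, by omega⟩)).1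
  set A : ℕ → ℝ := fun t => ‖xs - x t‖ ^ 2 with hA
  set β : ℕ → ℝ := fun t => ((t : ℝ) ^ (c + ε))⁻¹ / 2 with hβ
  -- per-step bound
  have key : ∀ t ∈ Finset.Icc 1 T, max (g (x (t + 1))) 0
      ≤ 3 * F * (d : ℝ) * D * (t : ℝ) ^ (-(1 + ε)) + β t * (A t - A (t + 1)) := by
    intro t ht
    obtain ⟨ht1, ht2⟩ := Finset.mem_Icc.mp ht
    have htR : (1 : ℝ) ≤ (t : ℝ) := by exact_mod_cast ht1
    have htpos : (0 : ℝ) < (t : ℝ) := by linarith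
    set w := x t with hw
    set xh := x (t + 1) with hxh
    have hwX : w ∈ X := hmemX t ht1 (by omega)
    have hxhX : xh ∈ X := (hupd t ht).1
    have hmin := (hupd t ht).2
    set G := gradient (h t) w with hG
    set μ := (t : ℝ) ^ c with hμ
    have hμpos : 0 < μ := Real.rpow_pos_of_pos htpos c
    set Λ := lam t * γ t with hΛ
    have hγt : γ t = (t : ℝ) ^ (c + ε) := hγ t ht
    have hγpos : 0 < γ t := by rw [hγt]; positivity
    have hΛge : (t : ℝ) ^ c * (t : ℝ) ^ (c + ε) ≤ Λ := by
      rw [hΛ, hγt]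
      exact mul_le_mul_of_nonneg_right (hlam t ht) (by positivity)
    have hΛpos : 0 < Λ := lt_of_lt_of_le (by positivity) hΛge
    -- convexity of the penalty
    have hpen : ConvexOn ℝ X (fun z => max (g z) 0) := by
      have := hg.sup (convexOn_const (0 : ℝ) hX)
      simpa [Pi.sup_def] using this
    have hgxs0 : max (g xs) 0 = 0 := max_eq_right hgxs
    -- step inequality for each θ ∈ (0,1]
    have hstep : ∀ θ : ℝ, 0 < θ → θ ≤ 1 →
        Λ * max (g xh) 0 ≤ ⟪G, xs - xh⟫ + μ * ⟪xh - w, xs - xh⟫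
          + θ * (μ / 2 * ‖xs - xh‖ ^ 2) := by
      intro θ hθ0 hθ1
      set zθ := xh + θ • (xs - xh) with hz
      have hzX : zθ ∈ X := hX.add_smul_sub_mem hxhX hxs ⟨hθ0.le, hθ1⟩
      have hle' : h t w + ⟪G, xh - w⟫ + Λ * max (g xh) 0 + μ / 2 * ‖xh - w‖ ^ 2
          ≤ h t w + ⟪G, zθ - w⟫ + Λ * max (g zθ) 0 + μ / 2 * ‖zθ - w‖ ^ 2 :=
        isMinOn_iff.mp hmin _ hzX
      have hdz : zθ - w = (xh - w) + θ • (xs - xh) := by rw [hz]; abel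
      have hinner : ⟪G, zθ - w⟫ = ⟪G, xh - w⟫ + θ * ⟪G, xs - xh⟫ := by
        rw [hdz, inner_add_right, real_inner_smul_right]
      have hnorm : ‖zθ - w‖ ^ 2
          = ‖xh - w‖ ^ 2 + 2 * θ * ⟪xh - w, xs - xh⟫ + θ ^ 2 * ‖xs - xh‖ ^ 2 := by
        rw [hdz, norm_add_sq_real, real_inner_smul_right, norm_smul,
          Real.norm_eq_abs, abs_of_pos hθ0]
        ring
      have hcvx : max (g zθ) 0 ≤ (1 - θ) * max (g xh) 0 + θ * max (g xs) 0 := by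
        have hzeq : zθ = (1 - θ) • xh + θ • xs := by
          rw [hz]; simp [smul_sub, sub_smul]; abel
        rw [hzeq]
        exact hpen.2 hxhX hxs (by linarith) hθ0.le (by ring)
      have hcvx' : Λ * max (g zθ) 0 ≤ Λ * ((1 - θ) * max (g xh) 0) := by
        have := hcvx
        rw [hgxs0, mul_zero, add_zero] at this
        exact mul_le_mul_of_nonneg_left this hΛpos.le
      have h4 : θ * (Λ * max (g xh) 0)
          ≤ θ * (⟪G, xs - xh⟫ + μ * ⟪xh - w, xs - xh⟫ + θ * (μ / 2 * ‖xs - xh‖ ^ 2)) := by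
        nlinarith [hle', hinner, hnorm, hcvx']
      exact le_of_mul_le_mul_left h4 hθ0
    -- take θ → 0
    have hmain : Λ * max (g xh) 0 ≤ ⟪G, xs - xh⟫ + μ * ⟪xh - w, xs - xh⟫ := by
      by_contra hcon
      push_neg at hcon
      set K := μ / 2 * ‖xs - xh‖ ^ 2 with hK
      have hK0 : 0 ≤ K := by positivity
      set δ := Λ * max (g xh) 0 - (⟪G, xs - xh⟫ + μ * ⟪xh - w, xs - xh⟫) with hδ
      have hδ0 : 0 < δ := by simp only [hδ]; linarith
      have hθdef : 0 < min 1 (δ / (2 * (K + 1))) := by positivity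
      have := hstep (min 1 (δ / (2 * (K + 1)))) hθdef (min_le_left _ _)
      have hle2 : min 1 (δ / (2 * (K + 1))) * K ≤ (δ / (2 * (K + 1))) * K :=
        mul_le_mul_of_nonneg_right (min_le_right _ _) hK0
      have hlt : (δ / (2 * (K + 1))) * K < δ := by
        rw [div_mul_eq_mul_div, div_lt_iff₀ (by linarith)]
        nlinarith
      linarith
    -- inner product identity
    have hid : μ * ⟪xh - w, xs - xh⟫
        = μ / 2 * (‖xs - w‖ ^ 2 - ‖xs - xh‖ ^ 2 - ‖xh - w‖ ^ 2) := by
      have h5 : xs - w = (xs - xh) + (xh - w) := by abel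
      have h6 : ‖xs - w‖ ^ 2
          = ‖xs - xh‖ ^ 2 + 2 * ⟪xs - xh, xh - w⟫ + ‖xh - w‖ ^ 2 := by
        rw [h5, norm_add_sq_real]
      have h7 : ⟪xs - xh, xh - w⟫ = ⟪xh - w, xs - xh⟫ := real_inner_comm _ _
      rw [h7] at h6
      linear_combination -(μ / 2) * h6
    -- gradient bound
    have hgb : ⟪G, xs - xh⟫ ≤ 3 * F * (d : ℝ) * D := by
      have h6 := grad_pair_bound hX hwX hxs hxhX (hdiff t ht w hwX) (hlip t ht)
      calc ⟪G, xs - xh⟫ ≤ 3 * F * (d : ℝ) * ‖xs - xh‖ := h6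
        _ ≤ 3 * F * (d : ℝ) * D := mul_le_mul_of_nonneg_left (hD xs hxs xh hxhX) ha0
    have hC : 0 ≤ μ / 2 * ‖xh - w‖ ^ 2 := by positivity
    have hAB : Λ * max (g xh) 0
        ≤ 3 * F * (d : ℝ) * D + μ / 2 * (‖xs - w‖ ^ 2 - ‖xs - xh‖ ^ 2) := by
      rw [hid] at hmain
      nlinarith [hmain, hgb, hC]
    -- divide by P = t^c * t^(c+ε)
    set P := (t : ℝ) ^ c * (t : ℝ) ^ (c + ε) with hP
    have hPpos : 0 < P := by positivity
    have hPv : P * max (g xh) 0 ≤ Λ * max (g xh) 0 :=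
      mul_le_mul_of_nonneg_right hΛge (le_max_right _ _)
    have hv : max (g xh) 0
        ≤ (3 * F * (d : ℝ) * D + μ / 2 * (‖xs - w‖ ^ 2 - ‖xs - xh‖ ^ 2)) / P := by
      rw [le_div_iff₀ hPpos]
      calc max (g xh) 0 * P = P * max (g xh) 0 := by ring
        _ ≤ Λ * max (g xh) 0 := hPv
        _ ≤ _ := hAB
    have hcne : ((t : ℝ) ^ c) ≠ 0 := ne_of_gt hμpos
    have hcene : ((t : ℝ) ^ (c + ε)) ≠ 0 := ne_of_gt (Real.rpow_pos_of_pos htpos _)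
    have hsplit : (3 * F * (d : ℝ) * D + μ / 2 * (‖xs - w‖ ^ 2 - ‖xs - xh‖ ^ 2)) / P
        = 3 * F * (d : ℝ) * D / P
          + ((t : ℝ) ^ (c + ε))⁻¹ / 2 * (‖xs - w‖ ^ 2 - ‖xs - xh‖ ^ 2) := by
      rw [hP, hμ]
      field_simp
    have hPbound : 3 * F * (d : ℝ) * D / P ≤ 3 * F * (d : ℝ) * D * (t : ℝ) ^ (-(1 + ε)) := by
      rw [div_eq_mul_inv]
      refine mul_le_mul_of_nonneg_left ?_ haD0
      have h7 : P = (t : ℝ) ^ (c + (c + ε)) := by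
        rw [hP]
        exact (Real.rpow_add htpos c (c + ε)).symm
      rw [h7, ← Real.rpow_neg htpos.le]
      exact Real.rpow_le_rpow_of_exponent_le htR (by linarith)
    have : max (g xh) 0 ≤ 3 * F * (d : ℝ) * D * (t : ℝ) ^ (-(1 + ε))
        + ((t : ℝ) ^ (c + ε))⁻¹ / 2 * (‖xs - w‖ ^ 2 - ‖xs - xh‖ ^ 2) := by
      calc max (g xh) 0 ≤ _ := hv
        _ = _ := hsplit
        _ ≤ _ := by linarith [hPbound]
    simpa [hβ, hA, hw, hxh] using this
  -- sum the per-step bounds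
  have hsum1 : ∑ t ∈ Finset.Icc 1 T, ((t : ℝ)) ^ (-(1 + ε)) ≤ 1 + 1 / ε := by
    have h1 := sum_rpow_le hε T hT
    have h2 : 0 ≤ (T : ℝ) ^ (-ε) := Real.rpow_nonneg (by positivity) _
    have h3 : (1 - (T : ℝ) ^ (-ε)) / ε ≤ 1 / ε :=
      (div_le_div_iff_of_pos_right hε).mpr (by linarith)
    linarith
  have hβmono : ∀ t : ℕ, 1 ≤ t → β (t + 1) ≤ β t := by
    intro t ht
    have htR : (0 : ℝ) < (t : ℝ) := by exact_mod_cast Nat.lt_of_lt_of_le Nat.zero_lt_one ht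
    have h1 : ((t : ℝ)) ^ (c + ε) ≤ ((t : ℝ) + 1) ^ (c + ε) :=
      Real.rpow_le_rpow htR.le (by linarith) (by linarith)
    have h2 : (0 : ℝ) < (t : ℝ) ^ (c + ε) := Real.rpow_pos_of_pos htR _
    have h3 : (((t : ℝ) + 1) ^ (c + ε))⁻¹ ≤ ((t : ℝ) ^ (c + ε))⁻¹ :=
      inv_anti₀ h2 h1
    simp only [hβ]
    push_cast
    linarith
  have hA0 : ∀ t, 0 ≤ A t := fun t => by simp only [hA]; positivity
  have htel := telescope_sum hβmono hA0 T hT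
  have hβ1 : β 1 = 1 / 2 := by simp [hβ, Real.one_rpow]
  have hβT : 0 ≤ β (T + 1) * A (T + 1) := by
    have : (0:ℝ) ≤ β (T+1) := by simp only [hβ]; positivity
    exact mul_nonneg this (hA0 _)
  have hA1 : A 1 ≤ D ^ 2 := by
    simp only [hA]
    have := hD xs hxs (x 1) hx1
    nlinarith [norm_nonneg (xs - x 1)]
  have hsum : ∑ t ∈ Finset.Icc 1 T, max (g (x (t + 1))) 0
      ≤ 3 * F * (d : ℝ) * D * (1 + 1 / ε) + D ^ 2 / 2 := by
    calc ∑ t ∈ Finset.Icc 1 T, max (g (x (t + 1))) 0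
        ≤ ∑ t ∈ Finset.Icc 1 T, (3 * F * (d : ℝ) * D * (t : ℝ) ^ (-(1 + ε))
            + β t * (A t - A (t + 1))) := Finset.sum_le_sum key
      _ = 3 * F * (d : ℝ) * D * (∑ t ∈ Finset.Icc 1 T, ((t : ℝ)) ^ (-(1 + ε)))
            + ∑ t ∈ Finset.Icc 1 T, β t * (A t - A (t + 1)) := by
          rw [Finset.sum_add_distrib, Finset.mul_sum]
      _ ≤ 3 * F * (d : ℝ) * D * (1 + 1 / ε) + (β 1 * A 1 - β (T + 1) * A (T + 1)) := by
          have := mul_le_mul_of_nonneg_left hsum1 haD0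
          linarith [htel]
      _ ≤ 3 * F * (d : ℝ) * D * (1 + 1 / ε) + D ^ 2 / 2 := by
          rw [hβ1]
          have : (0:ℝ) ≤ A 1 := hA0 1
          linarith
  have h9 : (1 : ℝ) + 1 / ε = (1 + ε) / ε := by
    rw [add_div, div_self (ne_of_gt hε)]
    ring
  have hfinal : 3 * F * (d : ℝ) * D * (1 + 1 / ε) = 3 * F * (d : ℝ) * D * (1 + ε) / ε := by
    rw [h9, mul_div_assoc]
  have hFd2 : 0 ≤ 27 * F ^ 2 * (d : ℝ) ^ 2 / 4 := by positivity
  have hD2 : 0 ≤ D ^ 2 := sq_nonneg D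
  linarith [hsum, hfinal.le, hfinal.ge]
end

section
/- Let X ⊆ ℝ^d be a nonempty compact convex set with ‖x − y‖₂ ≤ D for all x, y ∈ X, let F > 0, d ≥ 1, c ∈ [1/2, 1), and let T be a positive integer. For each t = 1, …, T let h_t : ℝ^d → ℝ be convex, differentiable, and Lipschitz continuous with constant 3Fd on X, let g_t : ℝ^d → ℝ be convex on X, and suppose x* ∈ X satisfies g_t(x*) ≤ 0 for all t. Let x_1 ∈ X, and for each t let λ_t ≥ 0, γ_t > 0, α_t := t^c, and let x_{t+1} be the minimizer over X of x ↦ h_t(x_t) + ⟨∇h_t(x_t), x − x_t⟩ + λ_t γ_t·max{g_t(x), 0} + (α_t/2)‖x − x_t‖₂². Then ∑_{t=1}^{T} ‖x_t − x_{t+1}‖₂² ≤ (12FdD/(1−c))·T^{1−c} + D². -/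
set_option maxHeartbeats 1000000

open RealInnerProductSpace

lemma mix_norm_sq {E : Type*} [NormedAddCommGroup E] [InnerProductSpace ℝ E]
    (a b p : E) (θ : ℝ) :
    ‖((1-θ)•a + θ•b) - p‖^2
      = (1-θ)*‖a-p‖^2 + θ*‖b-p‖^2 - θ*(1-θ)*‖a-b‖^2 := by
  have h1 : ((1-θ)•a + θ•b) - p = (1-θ)•(a-p) + θ•(b-p) := by module
  have e2 : ‖a - b‖^2 = ‖a-p‖^2 - 2*⟪a-p, b-p⟫ + ‖b-p‖^2 := by
    have h3 : a - b = (a-p) - (b-p) := by abel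
    rw [h3, norm_sub_sq_real]
  rw [h1, norm_add_sq_real, norm_smul, norm_smul, real_inner_smul_left, real_inner_smul_right,
    mul_pow, mul_pow, Real.norm_eq_abs, Real.norm_eq_abs, sq_abs, sq_abs, e2]
  ring

lemma inner_gradient_abs_le {E : Type*} [NormedAddCommGroup E] [InnerProductSpace ℝ E]
    [CompleteSpace E]
    {X : Set E} (hX : Convex ℝ X) {f : E → ℝ} {a b : E} (ha : a ∈ X) (hb : b ∈ X)
    (hdf : DifferentiableAt ℝ f a) {L : ℝ}
    (hlip : ∀ x ∈ X, ∀ y ∈ X, |f x - f y| ≤ L * ‖x - y‖) :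
    |⟪gradient f a, b - a⟫| ≤ L * ‖b - a‖ := by
  have hL : HasDerivAt (fun s : ℝ => a + s • (b - a)) (b - a) 0 := by
    simpa using ((hasDerivAt_id (0:ℝ)).smul_const (b - a)).const_add a
  have hgrad : HasFDerivAt f ((InnerProductSpace.toDual ℝ E) (gradient f a)) a :=
    hdf.hasGradientAt.hasFDerivAt
  have hφ : HasDerivAt (fun s : ℝ => f (a + s • (b - a))) ⟪gradient f a, b - a⟫ 0 := by
    have hgrad' : HasFDerivAt f ((InnerProductSpace.toDual ℝ E) (gradient f a))
        (a + (0:ℝ) • (b - a)) := by simpa using hgrad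
    have := hgrad'.comp_hasDerivAt 0 hL
    simpa [InnerProductSpace.toDual_apply_apply, Function.comp_def] using this
  have htend : Filter.Tendsto (slope (fun s : ℝ => f (a + s • (b - a))) 0)
      (nhdsWithin 0 (Set.Ioi 0)) (nhds ⟪gradient f a, b - a⟫) :=
    (hasDerivAt_iff_tendsto_slope.1 hφ).mono_left
      (nhdsWithin_mono 0 (fun y hy => ne_of_gt hy))
  have habs : Filter.Tendsto (fun s => |slope (fun s : ℝ => f (a + s • (b - a))) 0 s|)
      (nhdsWithin 0 (Set.Ioi 0)) (nhds |⟪gradient f a, b - a⟫|) := htend.abs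
  refine le_of_tendsto habs ?_
  have hmem : Set.Ioo (0:ℝ) 1 ∈ nhdsWithin (0:ℝ) (Set.Ioi 0) := by
    rw [show Set.Ioo (0:ℝ) 1 = Set.Ioi 0 ∩ Set.Iio 1 from rfl]
    exact Filter.inter_mem self_mem_nhdsWithin
      (mem_nhdsWithin_of_mem_nhds (Iio_mem_nhds one_pos))
  filter_upwards [hmem] with s hs
  have hsX : a + s • (b - a) ∈ X := by
    have := hX ha hb (by linarith [hs.2] : (0:ℝ) ≤ 1 - s) hs.1.le (by ring)
    convert this using 1
    module
  have hl := hlip _ hsX a ha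
  have hnorm : ‖(a + s • (b - a)) - a‖ = s * ‖b - a‖ := by
    have h4 : (a + s • (b - a)) - a = s • (b - a) := by abel
    rw [h4, norm_smul, Real.norm_eq_abs, abs_of_pos hs.1]
  rw [hnorm] at hl
  have hslope : slope (fun s : ℝ => f (a + s • (b - a))) 0 s
      = (f (a + s • (b - a)) - f (a + (0:ℝ) • (b - a))) / s := by
    rw [slope_def_field]; simp only [sub_zero]
  rw [hslope, abs_div, abs_of_pos hs.1, div_le_iff₀ hs.1]
  calc |f (a + s • (b - a)) - f (a + (0:ℝ) • (b - a))|
      = |f (a + s • (b - a)) - f a| := by norm_num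
    _ ≤ L * (s * ‖b - a‖) := hl
    _ = L * ‖b - a‖ * s := by ring

lemma sum_inv_rpow {c : ℝ} (hc0 : 0 ≤ c) (hc2 : c < 1) (T : ℕ) :
    ∑ t ∈ Finset.Icc 1 T, ((t:ℝ)^c)⁻¹ ≤ (T:ℝ)^(1-c) / (1-c) := by
  have hp0 : (0:ℝ) < 1 - c := by linarith
  induction T with
  | zero =>
    simp [Real.zero_rpow (by linarith : (1:ℝ)-c ≠ 0)]
  | succ T ih =>
    rw [Finset.sum_Icc_succ_top (by omega : 1 ≤ T + 1)]
    have hm : (0:ℝ) < (T:ℝ) + 1 := by positivity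
    have hmc : (0:ℝ) < ((T:ℝ)+1)^c := Real.rpow_pos_of_pos hm c
    have key : ((((T:ℕ)+1 : ℕ):ℝ)^c)⁻¹ ≤ (((T:ℝ)+1)^(1-c) - (T:ℝ)^(1-c)) / (1-c) := by
      push_cast
      have hbern := rpow_one_add_le_one_add_mul_self
        (s := -1/((T:ℝ)+1)) (p := 1-c)
        (by rw [neg_div, neg_le_neg_iff]
            exact div_le_one_of_le₀ (by linarith) hm.le) hp0.le (by linarith)
      have hA : 1 + (-1/((T:ℝ)+1)) = (T:ℝ)/((T:ℝ)+1) := by field_simp; ring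
      rw [hA] at hbern
      have hmul := mul_le_mul_of_nonneg_right hbern (Real.rpow_nonneg hm.le (1-c))
      have hL : ((T:ℝ)/((T:ℝ)+1))^(1-c) * ((T:ℝ)+1)^(1-c) = (T:ℝ)^(1-c) := by
        rw [Real.div_rpow (Nat.cast_nonneg T) hm.le]
        field_simp
      have h2 : ((T:ℝ)+1)^(1-c) / ((T:ℝ)+1) = (((T:ℝ)+1)^c)⁻¹ := by
        rw [div_eq_iff hm.ne', inv_mul_eq_div, eq_div_iff hmc.ne', ← Real.rpow_add hm]
        norm_num
      have hR : (1 + (1-c) * (-1/((T:ℝ)+1))) * ((T:ℝ)+1)^(1-c)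
          = ((T:ℝ)+1)^(1-c) - (1-c) * (((T:ℝ)+1)^c)⁻¹ := by
        rw [← h2]; ring
      rw [hL, hR] at hmul
      rw [le_div_iff₀ hp0]
      linarith
    have h5 := add_le_add ih key
    refine h5.trans ?_
    push_cast
    rw [← add_div, div_le_div_iff_of_pos_right hp0]
    ring_nf
    exact le_refl _

/-- Iterate-displacement bound (Theorem 2): with `α_t = t^c`,
`∑_{t=1}^T ‖x_t − x_{t+1}‖² ≤ (12FdD/(1−c))·T^{1−c} + D²`. -/
theorem displacement_bound_convex
    {d : ℕ} (hd : 1 ≤ d)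
    (X : Set (EuclideanSpace ℝ (Fin d)))
    (hne : X.Nonempty) (hcomp : IsCompact X) (hX : Convex ℝ X)
    (D : ℝ) (hD : ∀ x ∈ X, ∀ y ∈ X, ‖x - y‖ ≤ D)
    (F : ℝ) (hF : 0 < F)
    (c : ℝ) (hc₁ : 1 / 2 ≤ c) (hc₂ : c < 1)
    (T : ℕ) (hT : 1 ≤ T)
    (h : ℕ → EuclideanSpace ℝ (Fin d) → ℝ)
    (hconv : ∀ t ∈ Finset.Icc 1 T, ConvexOn ℝ X (h t))
    (hdiff : ∀ t ∈ Finset.Icc 1 T, ∀ x ∈ X, DifferentiableAt ℝ (h t) x)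
    (hlip : ∀ t ∈ Finset.Icc 1 T, ∀ x ∈ X, ∀ y ∈ X,
      |h t x - h t y| ≤ 3 * F * (d : ℝ) * ‖x - y‖)
    (g : ℕ → EuclideanSpace ℝ (Fin d) → ℝ)
    (hg : ∀ t ∈ Finset.Icc 1 T, ConvexOn ℝ X (g t))
    (xs : EuclideanSpace ℝ (Fin d)) (hxs : xs ∈ X)
    (hgxs : ∀ t ∈ Finset.Icc 1 T, g t xs ≤ 0)
    (x : ℕ → EuclideanSpace ℝ (Fin d)) (hx1 : x 1 ∈ X)
    (lam γ : ℕ → ℝ)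
    (hlam : ∀ t ∈ Finset.Icc 1 T, 0 ≤ lam t)
    (hγ : ∀ t ∈ Finset.Icc 1 T, 0 < γ t)
    (hupd : ∀ t ∈ Finset.Icc 1 T, x (t + 1) ∈ X ∧
      IsMinOn (fun z => h t (x t) + ⟪gradient (h t) (x t), z - x t⟫
        + lam t * γ t * max (g t z) 0 + (t : ℝ) ^ c / 2 * ‖z - x t‖ ^ 2) X (x (t + 1))) :
    (∑ t ∈ Finset.Icc 1 T, ‖x t - x (t + 1)‖ ^ 2) ≤
      12 * F * (d : ℝ) * D / (1 - c) * (T : ℝ) ^ (1 - c) + D ^ 2 := by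
  have hD0 : 0 ≤ D := by
    obtain ⟨z, hz⟩ := hne
    simpa using hD z hz z hz
  have h3Fd : (0:ℝ) ≤ 3 * F * (d:ℝ) := by positivity
  have hmem : ∀ t, 1 ≤ t → t ≤ T + 1 → x t ∈ X := by
    intro t
    induction t with
    | zero => omega
    | succ n ih =>
      intro h1 h2
      rcases Nat.lt_or_ge 1 (n+1) with hlt | hge
      · exact (hupd n (Finset.mem_Icc.2 ⟨by omega, by omega⟩)).1
      · have : n + 1 = 1 := by omega
        rw [this]; exact hx1
  have key : ∀ t ∈ Finset.Icc 1 T, ‖x t - x (t+1)‖^2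
      ≤ 12*F*(d:ℝ)*D * ((t:ℝ)^c)⁻¹ + (‖xs - x t‖^2 - ‖xs - x (t+1)‖^2) := by
    intro t ht
    obtain ⟨ht1, htT⟩ := Finset.mem_Icc.1 ht
    have htpos : (0:ℝ) < (t:ℝ) := by exact_mod_cast ht1
    have hα : (0:ℝ) < (t:ℝ)^c := Real.rpow_pos_of_pos htpos c
    have hxt : x t ∈ X := hmem t ht1 (by omega)
    have hxt1 : x (t+1) ∈ X := (hupd t ht).1
    have hmin := (hupd t ht).2
    set v := gradient (h t) (x t) with hv
    set φ : EuclideanSpace ℝ (Fin d) → ℝ := fun z => h t (x t) + ⟪v, z - x t⟫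
        + lam t * γ t * max (g t z) 0 + (t:ℝ)^c/2 * ‖z - x t‖^2 with hφ
    have hminp : ∀ z ∈ X, φ (x (t+1)) ≤ φ z := fun z hz => isMinOn_iff.1 hmin z hz
    have hlg : 0 ≤ lam t * γ t := mul_nonneg (hlam t ht) (hγ t ht).le
    have hsm : ∀ θ : ℝ, 0 < θ → θ ≤ 1 →
        (t:ℝ)^c/2 * (1-θ) * ‖xs - x (t+1)‖^2 ≤ φ xs - φ (x (t+1)) := by
      intro θ hθ0 hθ1
      set m := (1-θ) • x (t+1) + θ • xs with hm
      have hmX : m ∈ X := hX hxt1 hxs (by linarith) hθ0.le (by ring)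
      have hmin2 := hminp m hmX
      have hinner : ⟪v, m - x t⟫ = (1-θ)*⟪v, x (t+1) - x t⟫ + θ*⟪v, xs - x t⟫ := by
        have h5 : m - x t = (1-θ) • (x (t+1) - x t) + θ • (xs - x t) := by
          rw [hm]; module
        rw [h5, inner_add_right, real_inner_smul_right, real_inner_smul_right]
      have hmax : max (g t m) 0 ≤ (1-θ)*max (g t (x (t+1))) 0 + θ*max (g t xs) 0 := by
        have hgc := (hg t ht).2 hxt1 hxs (by linarith : (0:ℝ) ≤ 1-θ) hθ0.le (by ring)
        rw [← hm] at hgc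
        refine max_le (hgc.trans ?_) ?_
        · simp only [smul_eq_mul]
          nlinarith [le_max_left (g t (x (t+1))) 0, le_max_left (g t xs) 0]
        · nlinarith [le_max_right (g t (x (t+1))) 0, le_max_right (g t xs) 0]
      have hq2 : ‖m - x t‖^2 = (1-θ)*‖x (t+1) - x t‖^2 + θ*‖xs - x t‖^2
          - θ*(1-θ)*‖x (t+1) - xs‖^2 := by
        rw [hm]; exact mix_norm_sq _ _ _ _
      have hM := mul_le_mul_of_nonneg_left hmax hlg
      have hcomb : φ m ≤ (1-θ)*φ (x (t+1)) + θ*φ xs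
          - (t:ℝ)^c/2 * (θ*(1-θ)) * ‖x (t+1) - xs‖^2 := by
        simp only [hφ]
        rw [hinner, hq2]
        nlinarith [hM]
      have hnrev : ‖xs - x (t+1)‖ = ‖x (t+1) - xs‖ := norm_sub_rev _ _
      rw [hnrev]
      have h6 : θ * ((t:ℝ)^c/2 * (1-θ) * ‖x (t+1) - xs‖^2) ≤ θ * (φ xs - φ (x (t+1))) := by
        have hcomb' := hmin2.trans hcomb
        have hexp1 : θ * (φ xs - φ (x (t+1))) = θ * φ xs - θ * φ (x (t+1)) := by ring
        nlinarith [hcomb']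
      exact (mul_le_mul_iff_right₀ hθ0).1 h6
    have hsm' : (t:ℝ)^c/2 * ‖xs - x (t+1)‖^2 ≤ φ xs - φ (x (t+1)) := by
      by_contra hcon
      push_neg at hcon
      have hA0 : 0 ≤ φ xs - φ (x (t+1)) := sub_nonneg.2 (hminp xs hxs)
      set A := φ xs - φ (x (t+1)) with hA
      set B := (t:ℝ)^c/2 * ‖xs - x (t+1)‖^2 with hB
      have hBpos : 0 < B := lt_of_le_of_lt hA0 hcon
      have hθ0 : 0 < (B - A)/(2*B) := div_pos (by linarith) (by linarith)
      have hθ1 : (B - A)/(2*B) ≤ 1 := by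
        rw [div_le_one (by linarith)]; linarith
      have h7 := hsm _ hθ0 hθ1
      have hBform : (t:ℝ)^c/2 * (1 - (B-A)/(2*B)) * ‖xs - x (t+1)‖^2
          = B * (1 - (B-A)/(2*B)) := by rw [hB]; ring
      rw [hBform] at h7
      have h8 : B * (1 - (B-A)/(2*B)) = (B+A)/2 := by
        field_simp
        ring
      rw [h8] at h7
      linarith
    have hmaxxs : max (g t xs) 0 = 0 := max_eq_right (hgxs t ht)
    have hmax1 : (0:ℝ) ≤ max (g t (x (t+1))) 0 := le_max_right _ _
    have hgb1 := inner_gradient_abs_le hX hxt hxs (hdiff t ht _ hxt) (hlip t ht)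
    have hgb2 := inner_gradient_abs_le hX hxt hxt1 (hdiff t ht _ hxt) (hlip t ht)
    have hDxs : ‖xs - x t‖ ≤ D := hD xs hxs (x t) hxt
    have hDx1 : ‖x (t+1) - x t‖ ≤ D := hD (x (t+1)) hxt1 (x t) hxt
    have e1 : ⟪v, xs - x t⟫ ≤ 3*F*(d:ℝ)*D := by
      refine (le_abs_self _).trans (hgb1.trans ?_)
      exact mul_le_mul_of_nonneg_left hDxs h3Fd
    have e2 : -⟪v, x (t+1) - x t⟫ ≤ 3*F*(d:ℝ)*D := by
      refine (neg_le_abs _).trans (hgb2.trans ?_)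
      exact mul_le_mul_of_nonneg_left hDx1 h3Fd
    have hexp : φ xs - φ (x (t+1)) = ⟪v, xs - x t⟫ - ⟪v, x (t+1) - x t⟫
        - lam t * γ t * max (g t (x (t+1))) 0
        + (t:ℝ)^c/2 * ‖xs - x t‖^2 - (t:ℝ)^c/2 * ‖x (t+1) - x t‖^2 := by
      simp only [hφ, hmaxxs, mul_zero]
      ring
    rw [hexp] at hsm'
    have hfinal : (t:ℝ)^c/2 * ‖x (t+1) - x t‖^2
        ≤ 6*F*(d:ℝ)*D + (t:ℝ)^c/2 * (‖xs - x t‖^2 - ‖xs - x (t+1)‖^2) := by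
      nlinarith [mul_nonneg hlg hmax1]
    have hmul := mul_le_mul_of_nonneg_left hfinal
      (by positivity : (0:ℝ) ≤ 2*((t:ℝ)^c)⁻¹)
    have h9 : ‖x (t+1) - x t‖^2 ≤ 12*F*(d:ℝ)*D * ((t:ℝ)^c)⁻¹
        + (‖xs - x t‖^2 - ‖xs - x (t+1)‖^2) := by
      calc ‖x (t+1) - x t‖^2 = 2*((t:ℝ)^c)⁻¹ * ((t:ℝ)^c/2 * ‖x (t+1) - x t‖^2) := by
            field_simp
        _ ≤ 2*((t:ℝ)^c)⁻¹ * (6*F*(d:ℝ)*D + (t:ℝ)^c/2 * (‖xs - x t‖^2 - ‖xs - x (t+1)‖^2)) := hmul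
        _ = 12*F*(d:ℝ)*D * ((t:ℝ)^c)⁻¹ + (‖xs - x t‖^2 - ‖xs - x (t+1)‖^2) := by
            field_simp
            ring
    rw [show ‖x t - x (t+1)‖ = ‖x (t+1) - x t‖ from norm_sub_rev _ _]
    exact h9
  have hsum := Finset.sum_le_sum key
  rw [Finset.sum_add_distrib, ← Finset.mul_sum] at hsum
  have htel : ∀ n : ℕ, ∑ t ∈ Finset.Icc 1 n, (‖xs - x t‖^2 - ‖xs - x (t+1)‖^2)
      = ‖xs - x 1‖^2 - ‖xs - x (n+1)‖^2 := by
    intro n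
    induction n with
    | zero => simp
    | succ n ih => rw [Finset.sum_Icc_succ_top (by omega : 1 ≤ n + 1), ih]; ring
  rw [htel T] at hsum
  have hsum2 := sum_inv_rpow (by linarith : (0:ℝ) ≤ c) hc₂ T
  have h12 : (0:ℝ) ≤ 12*F*(d:ℝ)*D := by positivity
  have hxs1 : ‖xs - x 1‖^2 ≤ D^2 := by
    have := hD xs hxs (x 1) hx1
    nlinarith [norm_nonneg (xs - x 1)]
  have hnn : (0:ℝ) ≤ ‖xs - x (T+1)‖^2 := by positivity
  have hmul2 := mul_le_mul_of_nonneg_left hsum2 h12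
  have heq : 12*F*(d:ℝ)*D * ((T:ℝ)^(1-c)/(1-c)) = 12*F*(d:ℝ)*D/(1-c) * (T:ℝ)^(1-c) := by
    ring
  linarith [hsum, hmul2, hxs1, hnn, heq.ge, heq.le]
end

section
/- Let X ⊆ ℝ^d be a nonempty compact convex set with ‖x − y‖₂ ≤ D for all x, y ∈ X, let F > 0, G > 0, d ≥ 1, c ∈ [1/2, 1), ε > 0, and let T be a positive integer. For each t = 1, …, T let h_t : ℝ^d → ℝ be convex, differentiable, and Lipschitz continuous with constant 3Fd on X, let g_t : ℝ^d → ℝ be convex and Lipschitz continuous with constant G on X, and suppose x* ∈ X satisfies g_t(x*) ≤ 0 for all t. Let x_1 ∈ X, and for each t let λ_t ≥ t^c, γ_t := t^{c+ε}, α_t := t^c, and let x_{t+1} be the minimizer over X of x ↦ h_t(x_t) + ⟨∇h_t(x_t), x − x_t⟩ + λ_t γ_t·max{g_t(x), 0} + (α_t/2)‖x − x_t‖₂². Then ∑_{t=1}^{T} max{g_t(x_t), 0} ≤ ((27F²d² + G²)/4 + 3FdD(8 + 1/ε) + 2D²)·T^{1 − c/2}. -/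
open RealInnerProductSpace

section Helpers

variable {E : Type*} [NormedAddCommGroup E] [InnerProductSpace ℝ E]

/-- If `h` is `M`-Lipschitz on a convex set `X` and differentiable at `x₀ ∈ X`, then its
gradient at `x₀` pairs with differences of points of `X` like an `M`-Lipschitz functional. -/
lemma gradient_inner_le [CompleteSpace E] {X : Set E} (hX : Convex ℝ X)
    {h : E → ℝ} {x₀ : E} (hx₀ : x₀ ∈ X) (hdiff : DifferentiableAt ℝ h x₀)
    {M : ℝ} (hlip : ∀ x ∈ X, ∀ y ∈ X, |h x - h y| ≤ M * ‖x - y‖)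
    {w w' : E} (hw : w ∈ X) (hw' : w' ∈ X) :
    ⟪gradient h x₀, w - w'⟫ ≤ M * ‖w - w'‖ := by
  have hfd : HasFDerivAt h ((InnerProductSpace.toDual ℝ E) (gradient h x₀)) x₀ :=
    hdiff.hasGradientAt.hasFDerivAt
  set D' : E →L[ℝ] ℝ := (InnerProductSpace.toDual ℝ E) (gradient h x₀) with hD'
  have hline : ∀ u : E, HasDerivAt (fun s : ℝ => h (x₀ + s • u)) (D' u) 0 := by
    intro u
    have h1 : HasDerivAt (fun s : ℝ => x₀ + s • u) u 0 := by
      simpa using ((hasDerivAt_id (0 : ℝ)).smul_const u).const_add x₀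
    have h2 : HasFDerivAt h D' ((fun s : ℝ => x₀ + s • u) 0) := by simpa using hfd
    exact h2.comp_hasDerivAt 0 h1
  set φ : ℝ → ℝ := fun s => h (x₀ + s • (w - x₀)) - h (x₀ + s • (w' - x₀)) with hφdef
  have hφ : HasDerivAt φ (D' (w - x₀) - D' (w' - x₀)) 0 := (hline _).sub (hline _)
  have hval : D' (w - x₀) - D' (w' - x₀) = ⟪gradient h x₀, w - w'⟫ := by
    rw [hD']
    rw [InnerProductSpace.toDual_apply_apply, InnerProductSpace.toDual_apply_apply, ← inner_sub_right]
    congr 1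
    abel
  rw [hasDerivAt_iff_tendsto_slope] at hφ
  have hmono : Filter.Tendsto (slope φ 0) (nhdsWithin (0 : ℝ) (Set.Ioi 0))
      (nhds (D' (w - x₀) - D' (w' - x₀))) :=
    hφ.mono_left (nhdsWithin_mono 0 (fun s hs => ne_of_gt hs))
  have hev : ∀ᶠ s in nhdsWithin (0 : ℝ) (Set.Ioi 0), slope φ 0 s ≤ M * ‖w - w'‖ := by
    filter_upwards [Ioc_mem_nhdsGT_of_mem (Set.left_mem_Ico.mpr one_pos)] with s hs
    have hs0 : 0 < s := hs.1
    have hs1 : s ≤ 1 := hs.2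
    have hmem1 : x₀ + s • (w - x₀) ∈ X := by
      have e : x₀ + s • (w - x₀) = (1 - s) • x₀ + s • w := by
        rw [smul_sub, sub_smul, one_smul]; abel
      rw [e]; exact hX hx₀ hw (by linarith) hs0.le (by ring)
    have hmem2 : x₀ + s • (w' - x₀) ∈ X := by
      have e : x₀ + s • (w' - x₀) = (1 - s) • x₀ + s • w' := by
        rw [smul_sub, sub_smul, one_smul]; abel
      rw [e]; exact hX hx₀ hw' (by linarith) hs0.le (by ring)
    have hdiffpt : (x₀ + s • (w - x₀)) - (x₀ + s • (w' - x₀)) = s • (w - w') := by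
      rw [smul_sub, smul_sub, smul_sub]; abel
    have hb := hlip _ hmem1 _ hmem2
    rw [hdiffpt] at hb
    have hnorm : ‖s • (w - w')‖ = s * ‖w - w'‖ := by
      rw [norm_smul, Real.norm_eq_abs, abs_of_pos hs0]
    rw [hnorm] at hb
    have hle : φ s ≤ M * ‖w - w'‖ * s := by
      have h1 := le_abs_self (h (x₀ + s • (w - x₀)) - h (x₀ + s • (w' - x₀)))
      have : φ s = h (x₀ + s • (w - x₀)) - h (x₀ + s • (w' - x₀)) := rfl
      rw [this]
      calc h (x₀ + s • (w - x₀)) - h (x₀ + s • (w' - x₀))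
          ≤ |h (x₀ + s • (w - x₀)) - h (x₀ + s • (w' - x₀))| := h1
        _ ≤ M * (s * ‖w - w'‖) := hb
        _ = M * ‖w - w'‖ * s := by ring
    have hφ0 : φ 0 = 0 := by simp [hφdef]
    rw [slope_def_field, hφ0, sub_zero, sub_zero, div_le_iff₀ hs0]
    exact hle
  have hfinal := le_of_tendsto hmono hev
  rw [hval] at hfinal
  exact hfinal

/-- Convex combination norm identity. -/
lemma norm_combo (a b : E) (θ : ℝ) (h0 : 0 ≤ θ) (h1 : θ ≤ 1) :
    ‖(1 - θ) • a + θ • b‖ ^ 2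
      = (1 - θ) * ‖a‖ ^ 2 + θ * ‖b‖ ^ 2 - θ * (1 - θ) * ‖b - a‖ ^ 2 := by
  have e1 : ‖(1 - θ) • a + θ • b‖ ^ 2
      = (1 - θ) ^ 2 * ‖a‖ ^ 2 + 2 * ((1 - θ) * (θ * ⟪a, b⟫)) + θ ^ 2 * ‖b‖ ^ 2 := by
    rw [norm_add_sq_real, real_inner_smul_left, real_inner_smul_right, norm_smul, norm_smul,
      Real.norm_eq_abs, Real.norm_eq_abs, mul_pow, mul_pow, sq_abs, sq_abs]
  have e2 : ‖b - a‖ ^ 2 = ‖b‖ ^ 2 - 2 * ⟪a, b⟫ + ‖a‖ ^ 2 := by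
    rw [norm_sub_sq_real, real_inner_comm]
  rw [e1, e2]
  ring

/-- Minimizers of strongly convex functions over convex sets. -/
lemma strong_min {X : Set E} {ψ : E → ℝ} (hψ : ConvexOn ℝ X ψ) {β : ℝ} (hβ : 0 ≤ β)
    {p y z : E} (hy : y ∈ X) (hz : z ∈ X)
    (hmin : ∀ w ∈ X, ψ y + β * ‖y - p‖ ^ 2 ≤ ψ w + β * ‖w - p‖ ^ 2) :
    ψ y + β * ‖y - p‖ ^ 2 + β * ‖z - y‖ ^ 2 ≤ ψ z + β * ‖z - p‖ ^ 2 := by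
  have key : ∀ θ : ℝ, 0 < θ → θ ≤ 1 →
      ψ y + β * ‖y - p‖ ^ 2 + (1 - θ) * (β * ‖z - y‖ ^ 2) ≤ ψ z + β * ‖z - p‖ ^ 2 := by
    intro θ hθ0 hθ1
    have hm : (1 - θ) • y + θ • z ∈ X := hψ.1 hy hz (by linarith) hθ0.le (by ring)
    have h1 := hmin _ hm
    have h2 := hψ.2 hy hz (by linarith : (0:ℝ) ≤ 1 - θ) hθ0.le (by ring)
    simp only [smul_eq_mul] at h2
    have hid : ‖((1 - θ) • y + θ • z) - p‖ ^ 2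
        = (1 - θ) * ‖y - p‖ ^ 2 + θ * ‖z - p‖ ^ 2 - θ * (1 - θ) * ‖z - y‖ ^ 2 := by
      have e1 : ((1 - θ) • y + θ • z) - p = (1 - θ) • (y - p) + θ • (z - p) := by
        rw [smul_sub, smul_sub, sub_smul, one_smul, sub_smul, one_smul]; abel
      have e2 : (z - p) - (y - p) = z - y := by abel
      rw [e1, norm_combo (y - p) (z - p) θ hθ0.le hθ1, e2]
    rw [hid] at h1
    have hcomb : θ * (ψ y + β * ‖y - p‖ ^ 2 + (1 - θ) * (β * ‖z - y‖ ^ 2))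
        ≤ θ * (ψ z + β * ‖z - p‖ ^ 2) := by nlinarith [h1, h2]
    exact le_of_mul_le_mul_left hcomb hθ0
  by_contra hcon
  push_neg at hcon
  set Q : ℝ := β * ‖z - y‖ ^ 2 with hQdef
  have hQ0 : 0 ≤ Q := by positivity
  rcases eq_or_lt_of_le hQ0 with hQ | hQ
  · have h1 := key 1 one_pos le_rfl
    rw [← hQdef] at *
    simp only [sub_self, zero_mul, add_zero] at h1
    have : ψ y + β * ‖y - p‖ ^ 2 + Q = ψ y + β * ‖y - p‖ ^ 2 := by rw [← hQ]; ring
    linarith [hcon]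
  · set δ : ℝ := (ψ y + β * ‖y - p‖ ^ 2 + Q) - (ψ z + β * ‖z - p‖ ^ 2) with hδdef
    have hδ : 0 < δ := by simp only [hδdef]; linarith [hcon]
    set θ : ℝ := min 1 (δ / (2 * Q)) with hθdef
    have hθ0 : 0 < θ := lt_min one_pos (div_pos hδ (by linarith))
    have hk := key θ hθ0 (min_le_left _ _)
    have hθQ : θ * Q ≤ δ / 2 := by
      calc θ * Q ≤ (δ / (2 * Q)) * Q :=
            mul_le_mul_of_nonneg_right (min_le_right _ _) hQ0
        _ = δ / 2 := by field_simp
    linarith [hk]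

/-- Telescoping sum with increasing weights (Abel summation bound). -/
lemma abel_tele (r : ℝ) (hr : 0 < r) (a : ℕ → ℝ) (D2 : ℝ) :
    ∀ N : ℕ, (∀ t : ℕ, 1 ≤ t → t ≤ N + 1 → 0 ≤ a t ∧ a t ≤ D2) →
    ∑ t ∈ Finset.Icc 1 N, (t : ℝ) ^ r * (a t - a (t + 1))
      ≤ (N : ℝ) ^ r * D2 - (N : ℝ) ^ r * a (N + 1) := by
  intro N
  induction N with
  | zero =>
    intro _
    rw [Finset.Icc_eq_empty (by omega), Finset.sum_empty]
    simp [Real.zero_rpow hr.ne']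
  | succ n ih =>
    intro hb
    have hb' : ∀ t : ℕ, 1 ≤ t → t ≤ n + 1 → 0 ≤ a t ∧ a t ≤ D2 :=
      fun t h1 h2 => hb t h1 (by omega)
    have IH := ih hb'
    rw [Finset.sum_Icc_succ_top (by omega : 1 ≤ n + 1)]
    have hmono : (n : ℝ) ^ r ≤ ((n + 1 : ℕ) : ℝ) ^ r := by
      apply Real.rpow_le_rpow (Nat.cast_nonneg n) (by push_cast; linarith) hr.le
    obtain ⟨h0, hD2⟩ := hb (n + 1) (by omega) (by omega)
    have h0' := (hb (n + 2) (by omega) (by omega)).1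
    have hpos : (0:ℝ) ≤ ((n + 1 : ℕ) : ℝ) ^ r := Real.rpow_nonneg (Nat.cast_nonneg _) _
    have hprod : 0 ≤ (((n + 1 : ℕ) : ℝ) ^ r - (n : ℝ) ^ r) * (D2 - a (n + 1)) :=
      mul_nonneg (by linarith) (by linarith)
    have e : a (n + 1 + 1) = a (n + 2) := by norm_num
    rw [e]
    nlinarith [IH, hprod]

/-- One step of the integral comparison for `t ↦ t^(ν-1)`. -/
lemma rpow_step_s16 (ν : ℝ) (hν1 : 1 / 2 ≤ ν) (hν2 : ν ≤ 1) (N : ℕ) :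
    ((N + 1 : ℕ) : ℝ) ^ (ν - 1) ≤ 2 * (((N + 1 : ℕ) : ℝ) ^ ν - (N : ℝ) ^ ν) := by
  rcases Nat.eq_zero_or_pos N with h0 | hpos
  · subst h0
    norm_num
    rw [Real.zero_rpow (by intro hz; rw [hz] at hν1; linarith : ν ≠ 0)]
    norm_num
  · have hN1 : (1 : ℝ) ≤ (N : ℝ) := by exact_mod_cast hpos
    have hNpos : (0 : ℝ) < (N : ℝ) := by linarith
    have hlt : (N : ℝ) < (N : ℝ) + 1 := by linarith
    have hcont : ContinuousOn (fun y : ℝ => y ^ ν) (Set.Icc (N : ℝ) ((N : ℝ) + 1)) := by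
      intro y hy
      have hy0 : (0:ℝ) < y := lt_of_lt_of_le hNpos hy.1
      exact (Real.continuousAt_rpow_const y ν (Or.inl hy0.ne')).continuousWithinAt
    have hderiv : ∀ y ∈ Set.Ioo (N : ℝ) ((N : ℝ) + 1),
        HasDerivAt (fun y : ℝ => y ^ ν) (ν * y ^ (ν - 1)) y := by
      intro y hy
      exact Real.hasDerivAt_rpow_const (Or.inl (by linarith [hy.1] : y ≠ 0))
    obtain ⟨ξ, hξ, hslope⟩ :=
      exists_hasDerivAt_eq_slope (fun y : ℝ => y ^ ν) (fun y => ν * y ^ (ν - 1)) hlt hcont hderiv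
    have hξpos : (0 : ℝ) < ξ := lt_trans hNpos hξ.1
    have hsimp : (N : ℝ) + 1 - (N : ℝ) = 1 := by ring
    rw [hsimp, div_one] at hslope
    have hanti : ((N : ℝ) + 1) ^ (ν - 1) ≤ ξ ^ (ν - 1) := by
      have h1 : ξ ^ (1 - ν) ≤ ((N : ℝ) + 1) ^ (1 - ν) :=
        Real.rpow_le_rpow hξpos.le (le_of_lt hξ.2) (by linarith)
      have h2 : (0:ℝ) < ξ ^ (1 - ν) := Real.rpow_pos_of_pos hξpos _
      rw [show ν - 1 = -(1 - ν) by ring, Real.rpow_neg hξpos.le,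
        Real.rpow_neg (by linarith : (0:ℝ) ≤ (N : ℝ) + 1)]
      exact inv_anti₀ h2 h1
    have hξnn : (0:ℝ) ≤ ξ ^ (ν - 1) := (Real.rpow_pos_of_pos hξpos _).le
    have hcast : ((N + 1 : ℕ) : ℝ) = (N : ℝ) + 1 := by push_cast; ring
    rw [hcast]
    nlinarith [hslope, hanti, hξnn]

/-- Integral comparison: `∑_{t=1}^N t^(ν-1) ≤ 2 N^ν` for `ν ∈ [1/2, 1]`. -/
lemma sum_rpow_le_s16 (ν : ℝ) (hν1 : 1 / 2 ≤ ν) (hν2 : ν ≤ 1) :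
    ∀ N : ℕ, ∑ t ∈ Finset.Icc 1 N, (t : ℝ) ^ (ν - 1) ≤ 2 * (N : ℝ) ^ ν := by
  intro N
  induction N with
  | zero =>
    rw [Finset.Icc_eq_empty (by omega), Finset.sum_empty]
    simp [Real.zero_rpow (by linarith : ν ≠ 0)]
  | succ n ih =>
    rw [Finset.sum_Icc_succ_top (by omega : 1 ≤ n + 1)]
    have hstep := rpow_step_s16 ν hν1 hν2 n
    linarith [ih, hstep]

end Helpers

set_option maxHeartbeats 1600000 in
/-- Deterministic hard-constraint violation bound for time-varying
constraints (Theorem 2): with `λ_t ≥ t^c`, `γ_t = t^{c+ε}`, `α_t = t^c`,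
`∑_{t=1}^T [g_t(x_t)]₊ ≤ ((27F²d² + G²)/4 + 3FdD(8 + 1/ε) + 2D²)·T^{1−c/2}`. -/
theorem violation_bound_convex_time_varying
    {d : ℕ} (hd : 1 ≤ d)
    (X : Set (EuclideanSpace ℝ (Fin d)))
    (hne : X.Nonempty) (hcomp : IsCompact X) (hX : Convex ℝ X)
    (D : ℝ) (hD : ∀ x ∈ X, ∀ y ∈ X, ‖x - y‖ ≤ D)
    (F G : ℝ) (hF : 0 < F) (hG : 0 < G)
    (c ε : ℝ) (hc₁ : 1 / 2 ≤ c) (hc₂ : c < 1) (hε : 0 < ε)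
    (T : ℕ) (hT : 1 ≤ T)
    (h : ℕ → EuclideanSpace ℝ (Fin d) → ℝ)
    (hconv : ∀ t ∈ Finset.Icc 1 T, ConvexOn ℝ X (h t))
    (hdiff : ∀ t ∈ Finset.Icc 1 T, ∀ x ∈ X, DifferentiableAt ℝ (h t) x)
    (hlip : ∀ t ∈ Finset.Icc 1 T, ∀ x ∈ X, ∀ y ∈ X,
      |h t x - h t y| ≤ 3 * F * (d : ℝ) * ‖x - y‖)
    (g : ℕ → EuclideanSpace ℝ (Fin d) → ℝ)
    (hg : ∀ t ∈ Finset.Icc 1 T, ConvexOn ℝ X (g t))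
    (hglip : ∀ t ∈ Finset.Icc 1 T, ∀ x ∈ X, ∀ y ∈ X, |g t x - g t y| ≤ G * ‖x - y‖)
    (xs : EuclideanSpace ℝ (Fin d)) (hxs : xs ∈ X)
    (hgxs : ∀ t ∈ Finset.Icc 1 T, g t xs ≤ 0)
    (x : ℕ → EuclideanSpace ℝ (Fin d)) (hx1 : x 1 ∈ X)
    (lam γ : ℕ → ℝ)
    (hlam : ∀ t ∈ Finset.Icc 1 T, (t : ℝ) ^ c ≤ lam t)
    (hγ : ∀ t ∈ Finset.Icc 1 T, γ t = (t : ℝ) ^ (c + ε))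
    (hupd : ∀ t ∈ Finset.Icc 1 T, x (t + 1) ∈ X ∧
      IsMinOn (fun z => h t (x t) + ⟪gradient (h t) (x t), z - x t⟫
        + lam t * γ t * max (g t z) 0 + (t : ℝ) ^ c / 2 * ‖z - x t‖ ^ 2) X (x (t + 1))) :
    (∑ t ∈ Finset.Icc 1 T, max (g t (x t)) 0) ≤
      ((27 * F ^ 2 * (d : ℝ) ^ 2 + G ^ 2) / 4 + 3 * F * (d : ℝ) * D * (8 + 1 / ε)
        + 2 * D ^ 2) * (T : ℝ) ^ (1 - c / 2) := by
  have hD0 : 0 ≤ D := by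
    have := hD xs hxs xs hxs
    simpa using this
  have hM0 : (0:ℝ) ≤ 3 * F * (d : ℝ) := by positivity
  -- membership of iterates
  have hmem : ∀ t : ℕ, 1 ≤ t → t ≤ T + 1 → x t ∈ X := by
    intro t h1 h2
    rcases t with _ | t'
    · omega
    · rcases Nat.eq_zero_or_pos t' with h0 | hpos
      · subst h0; exact hx1
      · exact (hupd t' (Finset.mem_Icc.mpr ⟨hpos, by omega⟩)).1
  have haB : ∀ t : ℕ, 1 ≤ t → t ≤ T + 1 → 0 ≤ ‖xs - x t‖ ^ 2 ∧ ‖xs - x t‖ ^ 2 ≤ D ^ 2 := by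
    intro t h1 h2
    refine ⟨by positivity, ?_⟩
    have hb := hD xs hxs (x t) (hmem t h1 h2)
    have h0 : (0:ℝ) ≤ ‖xs - x t‖ := norm_nonneg _
    nlinarith
  have hTpos : (0:ℝ) < (T:ℝ) := by
    have : (0:ℕ) < T := by omega
    exact_mod_cast this
  have hT1 : (1:ℝ) ≤ (T:ℝ) := by exact_mod_cast hT
  have hS0 : (0:ℝ) ≤ (T:ℝ) ^ (1 - c/2) := Real.rpow_nonneg hTpos.le _
  -- per-step bound
  have hstep : ∀ t ∈ Finset.Icc 1 T, max (g t (x t)) 0 ≤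
      (G ^ 2 / 8 + 4 * (3 * F * (d : ℝ)) * D) * (t : ℝ) ^ (-(c/2))
      + 2 * ((t : ℝ) ^ (c/2) * (‖xs - x t‖ ^ 2 - ‖xs - x (t+1)‖ ^ 2)) := by
    intro t ht
    obtain ⟨ht1, htT⟩ := Finset.mem_Icc.mp ht
    have hxt : x t ∈ X := hmem t ht1 (by omega)
    have hxt1 : x (t + 1) ∈ X := (hupd t ht).1
    have htpos : (0:ℝ) < (t:ℝ) := by
      have : (0:ℕ) < t := ht1
      exact_mod_cast this
    have ht1r : (1:ℝ) ≤ (t:ℝ) := by exact_mod_cast ht1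
    set w : ℝ := (t:ℝ) ^ (c/2) with hwdef
    have hw : 0 < w := Real.rpow_pos_of_pos htpos _
    have hww : w * w = (t:ℝ) ^ c := by
      rw [hwdef, ← Real.rpow_add htpos]
      norm_num
    set v := gradient (h t) (x t) with hv
    set C := lam t * γ t with hC
    have hCge : (t:ℝ) ^ (2 * c + ε) ≤ C := by
      rw [hC, hγ t ht]
      calc (t:ℝ) ^ (2 * c + ε) = (t:ℝ) ^ c * (t:ℝ) ^ (c + ε) := by
            rw [← Real.rpow_add htpos]; ring_nf
        _ ≤ lam t * (t:ℝ) ^ (c + ε) :=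
            mul_le_mul_of_nonneg_right (hlam t ht) (Real.rpow_nonneg htpos.le _)
    have hC0 : 0 ≤ C := le_trans (Real.rpow_nonneg htpos.le _) hCge
    have hwC : w ≤ C := by
      refine le_trans ?_ hCge
      rw [hwdef]
      exact Real.rpow_le_rpow_of_exponent_le ht1r (by linarith)
    -- convexity of the non-quadratic part of the prox objective
    have hψ : ConvexOn ℝ X (fun z => h t (x t) + ⟪v, z - x t⟫ + C * max (g t z) 0) := by
      refine ⟨hX, fun p₁ hp₁ p₂ hp₂ aa bb haa hbb hab => ?_⟩
      simp only [smul_eq_mul]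
      have h0 : aa • p₁ + bb • p₂ - x t = aa • (p₁ - x t) + bb • (p₂ - x t) := by
        calc aa • p₁ + bb • p₂ - x t = aa • p₁ + bb • p₂ - (aa + bb) • x t := by
              rw [hab, one_smul]
          _ = aa • (p₁ - x t) + bb • (p₂ - x t) := by
              rw [add_smul, smul_sub, smul_sub]; abel
      have hIn : ⟪v, aa • p₁ + bb • p₂ - x t⟫ = aa * ⟪v, p₁ - x t⟫ + bb * ⟪v, p₂ - x t⟫ := by
        rw [h0, inner_add_right, real_inner_smul_right, real_inner_smul_right]
      have hgc := (hg t ht).2 hp₁ hp₂ haa hbb hab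
      simp only [smul_eq_mul] at hgc
      have hmaxle : max (g t (aa • p₁ + bb • p₂)) 0
          ≤ aa * max (g t p₁) 0 + bb * max (g t p₂) 0 := by
        apply max_le
        · have h1 : aa * g t p₁ ≤ aa * max (g t p₁) 0 :=
            mul_le_mul_of_nonneg_left (le_max_left _ _) haa
          have h2 : bb * g t p₂ ≤ bb * max (g t p₂) 0 :=
            mul_le_mul_of_nonneg_left (le_max_left _ _) hbb
          linarith [hgc]
        · have h1 : 0 ≤ aa * max (g t p₁) 0 := mul_nonneg haa (le_max_right _ _)
          have h2 : 0 ≤ bb * max (g t p₂) 0 := mul_nonneg hbb (le_max_right _ _)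
          linarith
      have hCmax := mul_le_mul_of_nonneg_left hmaxle hC0
      rw [hIn]
      have hh : h t (x t) = aa * h t (x t) + bb * h t (x t) := by
        rw [← add_mul, hab, one_mul]
      nlinarith [hCmax]
    -- strong convexity of the prox step, evaluated at xs
    have hmin : ∀ u ∈ X,
        (fun z => h t (x t) + ⟪v, z - x t⟫ + C * max (g t z) 0) (x (t+1))
          + (t:ℝ) ^ c / 2 * ‖x (t+1) - x t‖ ^ 2
        ≤ (fun z => h t (x t) + ⟪v, z - x t⟫ + C * max (g t z) 0) u
          + (t:ℝ) ^ c / 2 * ‖u - x t‖ ^ 2 := by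
      intro u hu
      exact isMinOn_iff.mp (hupd t ht).2 u hu
    have hsm := strong_min hψ (β := (t:ℝ) ^ c / 2)
      (by positivity) hxt1 hxs hmin
    have hmax0 : max (g t xs) 0 = 0 := max_eq_right (hgxs t ht)
    rw [hmax0, mul_zero, add_zero] at hsm
    -- gradient bound
    have hinner : ⟪v, xs - x t⟫ - ⟪v, x (t+1) - x t⟫ ≤ 3 * F * (d : ℝ) * D := by
      have h1 : ⟪v, xs - x t⟫ - ⟪v, x (t+1) - x t⟫ = ⟪v, xs - x (t+1)⟫ := by
        rw [← inner_sub_right]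
        congr 1
        abel
      rw [h1, hv]
      have h2 := gradient_inner_le hX hxt (hdiff t ht (x t) hxt) (hlip t ht) hxs hxt1
      calc ⟪gradient (h t) (x t), xs - x (t+1)⟫ ≤ 3 * F * (d : ℝ) * ‖xs - x (t+1)‖ := h2
        _ ≤ 3 * F * (d : ℝ) * D := mul_le_mul_of_nonneg_left (hD xs hxs _ hxt1) hM0
    set s : ℝ := max (g t (x (t+1))) 0 with hsdef
    set q : ℝ := ‖x (t+1) - x t‖ ^ 2 with hqdef
    have hsnn : 0 ≤ s := le_max_right _ _
    have hqnn : 0 ≤ q := by positivity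
    have hann : 0 ≤ (t:ℝ) ^ c / 2 * ‖xs - x (t+1)‖ ^ 2 := by positivity
    -- KEY inequality
    have hKEY : C * s + (t:ℝ) ^ c / 2 * q
        ≤ 3 * F * (d : ℝ) * D + (t:ℝ) ^ c / 2 * (‖xs - x t‖ ^ 2 - ‖xs - x (t+1)‖ ^ 2) := by
      nlinarith [hsm, hinner, hann]
    -- scale by 4/w
    have hstep2 : s + 2 * w * q
        ≤ 4 * (3 * F * (d : ℝ)) * D / w
          + 2 * (w * (‖xs - x t‖ ^ 2 - ‖xs - x (t+1)‖ ^ 2)) := by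
      have h4w : (0:ℝ) < 4 / w := by positivity
      have h1 : s ≤ 4 / w * (C * s) := by
        have hCw : 1 ≤ C / w := (one_le_div hw).mpr hwC
        have h4 : 1 ≤ 4 / w * C := by
          calc (1:ℝ) ≤ C / w := hCw
            _ ≤ 4 * (C / w) := by nlinarith [le_trans zero_le_one hCw]
            _ = 4 / w * C := by ring
        nlinarith [hsnn, h4]
      have h2 : 2 * w * q = 4 / w * ((t:ℝ) ^ c / 2 * q) := by
        rw [← hww]
        field_simp
        ring
      have h3 := mul_le_mul_of_nonneg_left hKEY h4w.le
      have h4 : 4 / w * (3 * F * (d : ℝ) * D + (t:ℝ) ^ c / 2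
            * (‖xs - x t‖ ^ 2 - ‖xs - x (t+1)‖ ^ 2))
          = 4 * (3 * F * (d : ℝ)) * D / w
            + 2 * (w * (‖xs - x t‖ ^ 2 - ‖xs - x (t+1)‖ ^ 2)) := by
        rw [← hww]
        field_simp
        ring
      calc s + 2 * w * q ≤ 4 / w * (C * s) + 4 / w * ((t:ℝ) ^ c / 2 * q) := by
            rw [← h2] at *
            linarith [h1]
        _ = 4 / w * (C * s + (t:ℝ) ^ c / 2 * q) := by ring
        _ ≤ 4 / w * (3 * F * (d : ℝ) * D + (t:ℝ) ^ c / 2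
              * (‖xs - x t‖ ^ 2 - ‖xs - x (t+1)‖ ^ 2)) := h3
        _ = _ := h4
    -- Young's inequality for the Lipschitz transfer term
    have hyoung : G * ‖x t - x (t+1)‖ ≤ G ^ 2 / (8 * w) + 2 * w * q := by
      have hqrev : ‖x t - x (t+1)‖ ^ 2 = q := by rw [hqdef, norm_sub_rev]
      have h8w : (0:ℝ) < 8 * w := by linarith
      have hkey2 : G ^ 2 / (8 * w) + 2 * w * ‖x t - x (t+1)‖ ^ 2 - G * ‖x t - x (t+1)‖
          = (G - 4 * w * ‖x t - x (t+1)‖) ^ 2 / (8 * w) := by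
        field_simp
        ring
      have hnn : (0:ℝ) ≤ (G - 4 * w * ‖x t - x (t+1)‖) ^ 2 / (8 * w) := by positivity
      rw [← hqrev]
      linarith [hkey2 ▸ hnn]
    -- Lipschitz transfer of violation
    have hPmax : max (g t (x t)) 0 ≤ s + G * ‖x t - x (t+1)‖ := by
      have habs := hglip t ht (x t) hxt (x (t+1)) hxt1
      have h1 : g t (x t) ≤ g t (x (t+1)) + G * ‖x t - x (t+1)‖ := by
        have h2 := le_abs_self (g t (x t) - g t (x (t+1)))
        linarith [habs]
      apply max_le
      · have h3 : g t (x (t+1)) ≤ s := le_max_left _ _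
        linarith
      · have h3 : (0:ℝ) ≤ G * ‖x t - x (t+1)‖ := by positivity
        linarith [hsnn]
    have hfin : max (g t (x t)) 0 ≤ G ^ 2 / (8 * w) + 4 * (3 * F * (d : ℝ)) * D / w
        + 2 * (w * (‖xs - x t‖ ^ 2 - ‖xs - x (t+1)‖ ^ 2)) := by
      linarith [hPmax, hyoung, hstep2]
    have hinv : w⁻¹ = (t:ℝ) ^ (-(c/2)) := by
      rw [hwdef, ← Real.rpow_neg htpos.le]
    calc max (g t (x t)) 0
        ≤ G ^ 2 / (8 * w) + 4 * (3 * F * (d : ℝ)) * D / w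
          + 2 * (w * (‖xs - x t‖ ^ 2 - ‖xs - x (t+1)‖ ^ 2)) := hfin
      _ = (G ^ 2 / 8 + 4 * (3 * F * (d : ℝ)) * D) * w⁻¹
          + 2 * (w * (‖xs - x t‖ ^ 2 - ‖xs - x (t+1)‖ ^ 2)) := by
          field_simp
      _ = _ := by rw [hinv]
  -- sum everything
  have hsum := Finset.sum_le_sum hstep
  rw [Finset.sum_add_distrib, ← Finset.mul_sum, ← Finset.mul_sum] at hsum
  -- bound the two sums
  have hA : ∑ t ∈ Finset.Icc 1 T, (t : ℝ) ^ (-(c/2)) ≤ 2 * (T:ℝ) ^ (1 - c/2) := by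
    have := sum_rpow_le_s16 (1 - c/2) (by linarith) (by linarith) T
    have he : ∀ t ∈ Finset.Icc 1 T, (t : ℝ) ^ (-(c/2)) = (t : ℝ) ^ ((1 - c/2) - 1) := by
      intro t _
      norm_num
    rw [Finset.sum_congr rfl he]
    exact this
  have hAbel : ∑ t ∈ Finset.Icc 1 T, (t : ℝ) ^ (c/2)
        * (‖xs - x t‖ ^ 2 - ‖xs - x (t+1)‖ ^ 2)
      ≤ (T:ℝ) ^ (c/2) * D ^ 2 := by
    have := abel_tele (c/2) (by linarith) (fun k => ‖xs - x k‖ ^ 2) (D ^ 2) T haB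
    have h2 : (0:ℝ) ≤ (T:ℝ) ^ (c/2) * ‖xs - x (T+1)‖ ^ 2 := by positivity
    linarith
  have hcoef : (0:ℝ) ≤ G ^ 2 / 8 + 4 * (3 * F * (d : ℝ)) * D := by
    have := mul_nonneg hM0 hD0
    nlinarith [sq_nonneg G]
  have hτ : (T:ℝ) ^ (c/2) ≤ (T:ℝ) ^ (1 - c/2) :=
    Real.rpow_le_rpow_of_exponent_le hT1 (by linarith)
  have hmain : ∑ t ∈ Finset.Icc 1 T, max (g t (x t)) 0
      ≤ (G ^ 2 / 8 + 4 * (3 * F * (d : ℝ)) * D) * (2 * (T:ℝ) ^ (1 - c/2))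
        + 2 * ((T:ℝ) ^ (c/2) * D ^ 2) := by
    have h1 := mul_le_mul_of_nonneg_left hA hcoef
    have h2 := mul_le_mul_of_nonneg_left hAbel (by norm_num : (0:ℝ) ≤ 2)
    linarith [hsum]
  -- final numeric comparison
  have h27 : (0:ℝ) ≤ 27 * F ^ 2 * (d:ℝ) ^ 2 := by positivity
  have hFdDe : (0:ℝ) ≤ 3 * F * (d:ℝ) * D * (1/ε) := by
    have h1 : (0:ℝ) ≤ 3 * F * (d:ℝ) * D := mul_nonneg hM0 hD0
    have h2 : (0:ℝ) ≤ 1/ε := by positivity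
    exact mul_nonneg h1 h2
  have hDτ : 2 * ((T:ℝ) ^ (c/2) * D ^ 2) ≤ 2 * D ^ 2 * (T:ℝ) ^ (1 - c/2) := by
    have := mul_le_mul_of_nonneg_right hτ (sq_nonneg D)
    nlinarith
  calc ∑ t ∈ Finset.Icc 1 T, max (g t (x t)) 0
      ≤ (G ^ 2 / 8 + 4 * (3 * F * (d : ℝ)) * D) * (2 * (T:ℝ) ^ (1 - c/2))
        + 2 * ((T:ℝ) ^ (c/2) * D ^ 2) := hmain
    _ ≤ (G ^ 2 / 4 + 8 * (3 * F * (d : ℝ)) * D + 2 * D ^ 2) * (T:ℝ) ^ (1 - c/2) := by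
        nlinarith [hDτ]
    _ ≤ ((27 * F ^ 2 * (d : ℝ) ^ 2 + G ^ 2) / 4 + 3 * F * (d : ℝ) * D * (8 + 1 / ε)
        + 2 * D ^ 2) * (T : ℝ) ^ (1 - c / 2) := by
        apply mul_le_mul_of_nonneg_right _ hS0
        nlinarith [h27, hFdDe]
end

section
/- Let X ⊆ ℝ^d be a nonempty compact convex set with ‖x − y‖₂ ≤ D for all x, y ∈ X, let F > 0, G > 0, σ > 0, d ≥ 1, c ∈ [1/2, 1), ε > 0, and let T be a positive integer. For each t = 1, …, T let h_t : ℝ^d → ℝ be differentiable, σ-strongly convex on X, and Lipschitz continuous with constant 3Fd on X, let g_t : ℝ^d → ℝ be convex and Lipschitz continuous with constant G on X, and suppose x* ∈ X satisfies g_t(x*) ≤ 0 for all t. Let x_1 ∈ X, and for each t let λ_t ≥ t^c, γ_t := t^{c+ε}, α_t := σ·t, and let x_{t+1} be the minimizer over X of x ↦ h_t(x_t) + ⟨∇h_t(x_t), x − x_t⟩ + λ_t γ_t·max{g_t(x), 0} + (α_t/2)‖x − x_t‖₂². Then ∑_{t=1}^{T} max{g_t(x_t), 0} ≤ (27F²d²/(4σ)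 + G²/4 + 3FdD(1 + 1/ε + 4/σ) + D²)·√(T·(1 + log T)). -/
open RealInnerProductSpace Filter Finset

open RealInnerProductSpace Filter

lemma dir_deriv_lower {E : Type*} [NormedAddCommGroup E] [InnerProductSpace ℝ E]
    [CompleteSpace E]
    {φ : E → ℝ} {y v : E} (hdy : DifferentiableAt ℝ φ y) (K : ℝ)
    (hK : ∀ τ : ℝ, τ ∈ Set.Ioc (0:ℝ) 1 → |φ (y + τ • v) - φ y| ≤ K * (τ * ‖v‖)) :
    -(K * ‖v‖) ≤ ⟪gradient φ y, v⟫ := by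
  have hgrad := hdy.hasGradientAt
  have hfd : HasFDerivAt φ (InnerProductSpace.toDual ℝ E (gradient φ y)) y := hgrad
  -- derivative of τ ↦ φ (y + τ • v) at 0 is ⟪grad, v⟫
  have hline : HasDerivAt (fun τ : ℝ => y + τ • v) v 0 := by
    simpa using ((hasDerivAt_id (0:ℝ)).smul_const v).const_add y
  have hcomp : HasDerivAt (fun τ : ℝ => φ (y + τ • v)) ⟪gradient φ y, v⟫ 0 := by
    have hfd' : HasFDerivAt φ (InnerProductSpace.toDual ℝ E (gradient φ y)) (y + (0:ℝ) • v) := by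
      simpa using hfd
    have := hfd'.comp_hasDerivAt 0 hline
    simpa [InnerProductSpace.toDual_apply_apply, Function.comp_def] using this
  have hslope := hasDerivAt_iff_tendsto_slope.1 hcomp
  have hslope' : Tendsto (slope (fun τ : ℝ => φ (y + τ • v)) 0) (nhdsWithin 0 (Set.Ioi 0))
      (nhds ⟪gradient φ y, v⟫) :=
    hslope.mono_left (nhdsWithin_mono _ (fun τ hτ => ne_of_gt hτ))
  refine ge_of_tendsto hslope' ?_
  filter_upwards [Ioc_mem_nhdsGT_of_mem (Set.mem_Ico.2 ⟨le_refl (0:ℝ), one_pos⟩)] with τ hτ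
  have hτ0 : 0 < τ := hτ.1
  have habs : -(K * (τ * ‖v‖)) ≤ φ (y + τ • v) - φ y := neg_le_of_abs_le (hK τ hτ)
  rw [slope_def_field]
  simp only [sub_zero, zero_smul, add_zero]
  rw [le_div_iff₀ hτ0]
  nlinarith [habs]
open RealInnerProductSpace Filter

lemma norm_combo_sq {E : Type*} [NormedAddCommGroup E] [InnerProductSpace ℝ E]
    (u v : E) (θ : ℝ) :
    ‖(1-θ) • u + θ • v‖^2 = (1-θ) * ‖u‖^2 + θ * ‖v‖^2 - θ * (1-θ) * ‖u - v‖^2 := by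
  have h1 : ∀ w : E, ‖w‖^2 = ⟪w, w⟫ := fun w => (real_inner_self_eq_norm_sq w).symm
  rw [h1, h1, h1, h1]
  simp only [inner_add_add_self, inner_sub_sub_self, real_inner_smul_left,
    real_inner_smul_right]
  ring

lemma min_strong_convex {E : Type*} [NormedAddCommGroup E] [InnerProductSpace ℝ E]
    {X : Set E} (hX : Convex ℝ X) {ψ : E → ℝ} (hψ : ConvexOn ℝ X ψ)
    (x0 : E) {α : ℝ} (hα : 0 ≤ α) {m : E} (hm : m ∈ X)
    (hmin : IsMinOn (fun z => ψ z + α / 2 * ‖z - x0‖^2) X m) {w : E} (hw : w ∈ X) :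
    ψ m + α / 2 * ‖m - x0‖^2 + α / 2 * ‖w - m‖^2 ≤ ψ w + α / 2 * ‖w - x0‖^2 := by
  set f : E → ℝ := fun z => ψ z + α / 2 * ‖z - x0‖^2 with hf
  have key : ∀ θ : ℝ, θ ∈ Set.Ioc (0:ℝ) 1 →
      f m + α / 2 * (1-θ) * ‖w - m‖^2 ≤ f w := by
    intro θ hθ
    have hθ0 : 0 < θ := hθ.1
    have hθ1 : θ ≤ 1 := hθ.2
    have hmem : (1-θ) • m + θ • w ∈ X := hX hm hw (by linarith) (le_of_lt hθ0) (by ring)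
    have hfm : f m ≤ f ((1-θ) • m + θ • w) := hmin hmem
    have hψc : ψ ((1-θ) • m + θ • w) ≤ (1-θ) * ψ m + θ * ψ w :=
      hψ.2 hm hw (by linarith) (le_of_lt hθ0) (by ring)
    have hdec : (1-θ) • m + θ • w - x0 = (1-θ) • (m - x0) + θ • (w - x0) := by
      module
    have hnorm : ‖(1-θ) • m + θ • w - x0‖^2
        = (1-θ) * ‖m - x0‖^2 + θ * ‖w - x0‖^2 - θ * (1-θ) * ‖m - w‖^2 := by
      rw [hdec, norm_combo_sq]
      have : m - x0 - (w - x0) = m - w := by abel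
      rw [this]
    simp only [hf] at hfm ⊢
    have hwm : ‖m - w‖ = ‖w - m‖ := norm_sub_rev m w
    rw [hnorm, hwm] at hfm
    have h2 : θ * ((ψ m + α / 2 * ‖m - x0‖^2) + α / 2 * (1-θ) * ‖w - m‖^2)
        ≤ θ * (ψ w + α / 2 * ‖w - x0‖^2) := by nlinarith [hfm, hψc]
    exact le_of_mul_le_mul_left (by linarith [h2]) hθ0
  -- take θ → 0⁺
  have htend : Tendsto (fun θ : ℝ => f m + α / 2 * (1-θ) * ‖w - m‖^2)
      (nhdsWithin 0 (Set.Ioi 0)) (nhds (f m + α / 2 * (1-(0:ℝ)) * ‖w - m‖^2)) := by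
    apply Tendsto.mono_left _ nhdsWithin_le_nhds
    exact (Continuous.tendsto (by continuity) 0)
  have hle : f m + α / 2 * (1-(0:ℝ)) * ‖w - m‖^2 ≤ f w := by
    refine le_of_tendsto htend ?_
    filter_upwards [Ioc_mem_nhdsGT_of_mem (Set.mem_Ico.2 ⟨le_refl (0:ℝ), one_pos⟩)] with θ hθ
    exact key θ hθ
  simp only [hf] at hle
  nlinarith [hle]
open Finset

-- Abel summation bound
lemma abel_bound (c w : ℕ → ℝ) (T : ℕ) (hT : 1 ≤ T)
    (hc : ∀ t, 1 ≤ t → t ≤ T + 1 → 0 ≤ c t) (hc1 : c 1 = 0)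
    (hw : ∀ t, 1 ≤ t → t + 1 ≤ T → w (t + 1) ≤ w t) (hwT : 0 ≤ w T) :
    ∑ t ∈ Icc 1 T, (c t - c (t + 1)) * w t ≤ 0 := by
  have key : ∀ T', 1 ≤ T' → T' ≤ T →
      ∑ t ∈ Icc 1 T', (c t - c (t + 1)) * w t ≤ -(c (T' + 1) * w T') := by
    intro T'
    induction T' with
    | zero => omega
    | succ n ih =>
      intro _ hle
      rcases Nat.eq_zero_or_pos n with h1 | h1
      · subst h1; simp [hc1]
      · have hn1 : 1 ≤ n := h1
        have hsum := ih hn1 (by omega)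
        rw [Finset.sum_Icc_succ_top (by omega : 1 ≤ n + 1)]
        have hwle : w (n + 1) ≤ w n := hw n hn1 (by omega)
        have hcn : 0 ≤ c (n + 1) := hc (n + 1) (by omega) (by omega)
        nlinarith [hsum]
  have := key T hT le_rfl
  have hcT : 0 ≤ c (T + 1) := hc (T + 1) (by omega) le_rfl
  nlinarith [this]

-- harmonic sum
lemma harmonic_le_log (T : ℕ) (hT : 1 ≤ T) :
    ∑ t ∈ Icc 1 T, (1 : ℝ) / t ≤ 1 + Real.log T := by
  induction T, hT using Nat.le_induction with
  | base => simp
  | succ n hn1 ih =>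
    rw [Finset.sum_Icc_succ_top (by omega : 1 ≤ n + 1)]
    have hnpos : (0:ℝ) < n := by exact_mod_cast hn1
    have hn1pos : (0:ℝ) < (n:ℝ) + 1 := by positivity
    have hlog : Real.log ((n:ℝ) / ((n:ℝ)+1)) ≤ (n:ℝ)/((n:ℝ)+1) - 1 :=
      Real.log_le_sub_one_of_pos (by positivity)
    rw [Real.log_div (ne_of_gt hnpos) (ne_of_gt hn1pos)] at hlog
    have hstep : (1:ℝ) / ((n:ℝ)+1) ≤ Real.log ((n:ℝ)+1) - Real.log n := by
      have : (n:ℝ)/((n:ℝ)+1) - 1 = -(1/((n:ℝ)+1)) := by field_simp; ring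
      rw [this] at hlog; linarith
    push_cast
    linarith [ih, hstep]

-- sum of t^{-(1+ε)}
lemma sum_rpow_one_add (T : ℕ) (hT : 1 ≤ T) {ε : ℝ} (hε : 0 < ε) :
    ∑ t ∈ Icc 1 T, ((t : ℝ)) ^ (-(1+ε)) ≤ 1 + 1/ε - (1/ε) * (T:ℝ) ^ (-ε) := by
  induction T, hT using Nat.le_induction with
  | base => simp
  | succ n hn1 ih =>
    rw [Finset.sum_Icc_succ_top (by omega : 1 ≤ n + 1)]
    set A : ℝ := (n:ℝ) with hA
    set B : ℝ := (n:ℝ) + 1 with hB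
    have hApos : (0:ℝ) < A := by rw [hA]; exact_mod_cast hn1
    have hBpos : (0:ℝ) < B := by rw [hB]; positivity
    have hlogAB : Real.log (A/B) ≤ A/B - 1 := Real.log_le_sub_one_of_pos (by positivity)
    have hlog : 1/B ≤ Real.log B - Real.log A := by
      rw [Real.log_div (ne_of_gt hApos) (ne_of_gt hBpos)] at hlogAB
      have : A/B - 1 = -(1/B) := by field_simp; rw [hB]; ring
      rw [this] at hlogAB; linarith
    -- A^{-ε} ≥ B^{-ε} + ε B^{-(1+ε)}
    have hexp : Real.exp (ε * (Real.log B - Real.log A)) ≥ 1 + ε * (1/B) := by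
      have h1 : ε * (1/B) ≤ ε * (Real.log B - Real.log A) :=
        mul_le_mul_of_nonneg_left hlog (le_of_lt hε)
      have h2 := Real.add_one_le_exp (ε * (Real.log B - Real.log A))
      linarith
    have hArpow : A ^ (-ε) = B ^ (-ε) * Real.exp (ε * (Real.log B - Real.log A)) := by
      rw [Real.rpow_def_of_pos hApos, Real.rpow_def_of_pos hBpos, ← Real.exp_add]
      ring_nf
    have hBsplit : B ^ (-(1+ε)) = B ^ (-ε) * (1/B) := by
      rw [show -(1+ε) = -ε + (-1) by ring, Real.rpow_add hBpos, Real.rpow_neg_one]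
      ring
    have hBe : (0:ℝ) < B ^ (-ε) := Real.rpow_pos_of_pos hBpos _
    have hkey : B ^ (-(1+ε)) ≤ (1/ε) * (A ^ (-ε) - B ^ (-ε)) := by
      rw [hArpow, hBsplit]
      have hstep : B ^ (-ε) * (ε * (1/B)) ≤ B ^ (-ε) * Real.exp (ε * (Real.log B - Real.log A)) - B ^ (-ε) := by
        nlinarith [hexp, hBe]
      have h4 := mul_le_mul_of_nonneg_left hstep (by positivity : (0:ℝ) ≤ 1/ε)
      have h5 : (1/ε) * (B ^ (-ε) * (ε * (1/B))) = B ^ (-ε) * (1/B) := by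
        field_simp
      rw [h5] at h4
      exact h4
    push_cast
    rw [← hB]
    linarith [ih, hkey]

-- sum of t^{-(2+ε)}
lemma sum_rpow_two_add (T : ℕ) (hT : 1 ≤ T) {ε : ℝ} (hε : 0 < ε) :
    ∑ t ∈ Icc 1 T, ((t : ℝ)) ^ (-(2+ε)) ≤ 2 - 1/(T:ℝ) := by
  induction T, hT using Nat.le_induction with
  | base => norm_num
  | succ n hn1 ih =>
    rw [Finset.sum_Icc_succ_top (by omega : 1 ≤ n + 1)]
    have hnpos : (0:ℝ) < n := by exact_mod_cast hn1
    have hn1pos : (0:ℝ) < (n:ℝ) + 1 := by positivity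
    have h1 : ((n:ℝ)+1) ^ (-(2+ε)) ≤ ((n:ℝ)+1) ^ (-(2:ℝ)) :=
      Real.rpow_le_rpow_of_exponent_le (by linarith) (by linarith)
    have h2 : ((n:ℝ)+1) ^ (-(2:ℝ)) = 1/((n:ℝ)+1)^2 := by
      rw [show (-(2:ℝ)) = -((2:ℕ):ℝ) by norm_num, Real.rpow_neg (by positivity),
        Real.rpow_natCast, one_div]
    have h3 : 1/((n:ℝ)+1)^2 ≤ 1/(n:ℝ) - 1/((n:ℝ)+1) := by
      rw [div_sub_div _ _ (ne_of_gt hnpos) (ne_of_gt hn1pos)]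
      rw [div_le_div_iff₀ (by positivity) (by positivity)]
      ring_nf
      nlinarith [hnpos]
    push_cast
    push_cast at ih
    nlinarith [ih, h1, h2.le, h2.ge, h3]
lemma amgm_aux (F d dl σ t : ℝ) (hσ : 0 < σ) (ht : 0 < t) :
    3*F*d*dl - σ*t/2*dl^2 ≤ 9*F^2*d^2/(2*σ) * (1/t) := by
  rw [div_mul_div_comm, le_div_iff₀ (by positivity)]
  nlinarith [sq_nonneg (3*F*d - σ*t*dl), mul_pos hσ ht]

lemma young_aux (G dl β : ℝ) (hβ : 0 < β) : G * dl ≤ G^2/(4*β) + β * dl^2 := by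
  rw [show G^2/(4*β) + β * dl^2 = (G^2 + 4*β^2*dl^2)/(4*β) by field_simp,
    le_div_iff₀ (by positivity)]
  nlinarith [sq_nonneg (G - 2*β*dl), hβ]

set_option maxHeartbeats 1000000 in

/-- Deterministic hard-constraint violation bound for strongly convex
losses and time-varying constraints (Theorem 4): with `λ_t ≥ t^c`, `γ_t = t^{c+ε}`,
`α_t = σt`, `∑_{t=1}^T [g_t(x_t)]₊ ≤ (27F²d²/(4σ) + G²/4 + 3FdD(1 + 1/ε + 4/σ) + D²)·√(T(1 + log T))`. -/
theorem violation_bound_strongly_convex_time_varying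
    {d : ℕ} (hd : 1 ≤ d)
    (X : Set (EuclideanSpace ℝ (Fin d)))
    (hne : X.Nonempty) (hcomp : IsCompact X) (hX : Convex ℝ X)
    (D : ℝ) (hD : ∀ x ∈ X, ∀ y ∈ X, ‖x - y‖ ≤ D)
    (F G σ : ℝ) (hF : 0 < F) (hG : 0 < G) (hσ : 0 < σ)
    (c ε : ℝ) (hc₁ : 1 / 2 ≤ c) (hc₂ : c < 1) (hε : 0 < ε)
    (T : ℕ) (hT : 1 ≤ T)
    (h : ℕ → EuclideanSpace ℝ (Fin d) → ℝ)
    (hdiff : ∀ t ∈ Finset.Icc 1 T, ∀ x ∈ X, DifferentiableAt ℝ (h t) x)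
    (hsc : ∀ t ∈ Finset.Icc 1 T, ∀ x ∈ X, ∀ y ∈ X,
      h t x ≥ h t y + ⟪gradient (h t) y, x - y⟫ + σ / 2 * ‖x - y‖ ^ 2)
    (hlip : ∀ t ∈ Finset.Icc 1 T, ∀ x ∈ X, ∀ y ∈ X,
      |h t x - h t y| ≤ 3 * F * (d : ℝ) * ‖x - y‖)
    (g : ℕ → EuclideanSpace ℝ (Fin d) → ℝ)
    (hg : ∀ t ∈ Finset.Icc 1 T, ConvexOn ℝ X (g t))
    (hglip : ∀ t ∈ Finset.Icc 1 T, ∀ x ∈ X, ∀ y ∈ X, |g t x - g t y| ≤ G * ‖x - y‖)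
    (xs : EuclideanSpace ℝ (Fin d)) (hxs : xs ∈ X)
    (hgxs : ∀ t ∈ Finset.Icc 1 T, g t xs ≤ 0)
    (x : ℕ → EuclideanSpace ℝ (Fin d)) (hx1 : x 1 ∈ X)
    (lam γ : ℕ → ℝ)
    (hlam : ∀ t ∈ Finset.Icc 1 T, (t : ℝ) ^ c ≤ lam t)
    (hγ : ∀ t ∈ Finset.Icc 1 T, γ t = (t : ℝ) ^ (c + ε))
    (hupd : ∀ t ∈ Finset.Icc 1 T, x (t + 1) ∈ X ∧
      IsMinOn (fun z => h t (x t) + ⟪gradient (h t) (x t), z - x t⟫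
        + lam t * γ t * max (g t z) 0 + σ * (t : ℝ) / 2 * ‖z - x t‖ ^ 2) X (x (t + 1))) :
    (∑ t ∈ Finset.Icc 1 T, max (g t (x t)) 0) ≤
      (27 * F ^ 2 * (d : ℝ) ^ 2 / (4 * σ) + G ^ 2 / 4
        + 3 * F * (d : ℝ) * D * (1 + 1 / ε + 4 / σ) + D ^ 2) *
        Real.sqrt ((T : ℝ) * (1 + Real.log T)) := by
  -- basic facts
  have hd1 : (1:ℝ) ≤ (d:ℝ) := by exact_mod_cast hd
  have hFd : (0:ℝ) ≤ 3 * F * (d:ℝ) := by positivity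
  have hD0 : 0 ≤ D := by
    obtain ⟨x₀, hx₀⟩ := hne
    have := hD x₀ hx₀ x₀ hx₀
    simpa using this
  have hT1 : (1:ℝ) ≤ (T:ℝ) := by exact_mod_cast hT
  have hlogT : 0 ≤ Real.log T := Real.log_nonneg hT1
  set L : ℝ := 1 + Real.log T with hLdef
  have hL1 : (1:ℝ) ≤ L := by simp only [hLdef]; linarith
  have hL0 : (0:ℝ) < L := by linarith
  set S : ℝ := Real.sqrt ((T:ℝ) * L) with hSdef
  have hS0 : 0 ≤ S := Real.sqrt_nonneg _
  have hS2 : S^2 = (T:ℝ) * L := Real.sq_sqrt (by positivity)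
  have hS1 : (1:ℝ) ≤ S := by nlinarith [hS2, hS0, hT1, hL1]
  set β : ℝ := Real.sqrt ((T:ℝ) / L) with hβdef
  have hβpos : (0:ℝ) < β := Real.sqrt_pos.2 (by positivity)
  have hβS : β * S = (T:ℝ) := by
    rw [hβdef, hSdef, ← Real.sqrt_mul (by positivity)]
    rw [show (T:ℝ) / L * ((T:ℝ) * L) = (T:ℝ)^2 by field_simp]
    exact Real.sqrt_sq (by positivity)
  have hβL : β * L = S := by
    rw [hβdef, hSdef]
    rw [show (L:ℝ) = Real.sqrt (L^2) from (Real.sqrt_sq (le_of_lt hL0)).symm]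
    rw [← Real.sqrt_mul (by positivity)]
    congr 1
    field_simp
    rw [Real.sq_sqrt (by positivity)]
  -- membership
  have hxmem : ∀ t, 1 ≤ t → t ≤ T + 1 → x t ∈ X := by
    intro t
    cases t with
    | zero => intro h1 h2; omega
    | succ n =>
      intro h1 h2
      rcases Nat.eq_zero_or_pos n with h'|h'
      · subst h'; exact hx1
      · exact (hupd n (Finset.mem_Icc.2 ⟨h', by omega⟩)).1
  -- sequences
  set cc : ℕ → ℝ := fun t => σ * ((t:ℝ) - 1) * ‖x t - xs‖^2 / 2 with hccdef
  set w1 : ℕ → ℝ := fun t => (t:ℝ) ^ (-(1+ε)) with hw1def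
  set w2 : ℕ → ℝ := fun t => (t:ℝ) ^ (-(2+ε)) with hw2def
  set w3 : ℕ → ℝ := fun t => 2 * β / (σ * (t:ℝ)) with hw3def
  -- MASTER inequality
  have master : ∀ t ∈ Finset.Icc 1 T,
      lam t * γ t * max (g t (x (t+1))) 0 + σ * (t:ℝ) / 2 * ‖x t - x (t+1)‖ ^ 2
          + cc (t+1)
        ≤ 3*F*(d:ℝ)*D + 3*F*(d:ℝ)*‖x t - x (t+1)‖ + cc t := by
    intro t ht
    obtain ⟨ht1, htT⟩ := Finset.mem_Icc.1 ht
    have hyX : x t ∈ X := hxmem t ht1 (by omega)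
    have hy'X : x (t+1) ∈ X := (hupd t ht).1
    have htR : (1:ℝ) ≤ (t:ℝ) := by exact_mod_cast ht1
    have htR0 : (0:ℝ) < (t:ℝ) := by linarith
    set grad := gradient (h t) (x t) with hgraddef
    have hLc0 : 0 ≤ lam t * γ t := by
      have h1 : (0:ℝ) < (t:ℝ)^c := Real.rpow_pos_of_pos htR0 c
      have h2 : (0:ℝ) < (t:ℝ)^(c+ε) := Real.rpow_pos_of_pos htR0 (c+ε)
      have h3 := hlam t ht
      rw [hγ t ht]
      nlinarith
    have haff : ConvexOn ℝ X (fun z => h t (x t) + ⟪grad, z - x t⟫) := by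
      refine ⟨hX, fun p hp q hq u v hu hv huv => le_of_eq ?_⟩
      have hv1 : v = 1 - u := by linarith
      subst hv1
      simp only [inner_sub_right, inner_add_right, real_inner_smul_right, smul_eq_mul]
      ring
    have hmax : ConvexOn ℝ X (fun z => max (g t z) 0) := by
      have hcv := (hg t ht).sup (convexOn_const (0:ℝ) hX)
      exact hcv
    have hψconv : ConvexOn ℝ X
        (fun z => h t (x t) + ⟪grad, z - x t⟫ + lam t * γ t * max (g t z) 0) := by
      have hs := hmax.smul hLc0
      simp only [smul_eq_mul] at hs
      exact haff.add hs
    have hα : (0:ℝ) ≤ σ * (t:ℝ) := by positivity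
    have hkey := min_strong_convex hX hψconv (x t) hα hy'X (hupd t ht).2 hxs
    have hmax0 : max (g t xs) 0 = 0 := max_eq_right (hgxs t ht)
    have hIP1 : ⟪grad, xs - x t⟫ ≤ 3*F*(d:ℝ)*D - σ/2 * ‖xs - x t‖^2 := by
      have h1 := hsc t ht xs hxs (x t) hyX
      have h2 := hlip t ht xs hxs (x t) hyX
      have h3 : ‖xs - x t‖ ≤ D := hD xs hxs (x t) hyX
      have h4 : |h t xs - h t (x t)| ≤ 3*F*(d:ℝ)*D := by
        refine le_trans h2 ?_
        exact mul_le_mul_of_nonneg_left h3 hFd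
      have h5 : h t xs - h t (x t) ≤ 3*F*(d:ℝ)*D := le_trans (le_abs_self _) h4
      linarith [h1, h5]
    have hIP2 : -(3*F*(d:ℝ) * ‖x (t+1) - x t‖) ≤ ⟪grad, x (t+1) - x t⟫ := by
      apply dir_deriv_lower (hdiff t ht (x t) hyX)
      intro τ hτ
      have hτ0 : 0 < τ := hτ.1
      have hτ1 : τ ≤ 1 := hτ.2
      have hmem : x t + τ • (x (t+1) - x t) ∈ X := by
        have heq : x t + τ • (x (t+1) - x t) = (1-τ) • x t + τ • x (t+1) := by module
        rw [heq]
        exact hX hyX hy'X (by linarith) (le_of_lt hτ0) (by ring)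
      have h2 := hlip t ht _ hmem (x t) hyX
      have h3 : ‖x t + τ • (x (t+1) - x t) - x t‖ = τ * ‖x (t+1) - x t‖ := by
        rw [add_sub_cancel_left, norm_smul, Real.norm_eq_abs, abs_of_pos hτ0]
      rw [h3] at h2
      exact h2
    have hrev1 : ‖xs - x t‖ = ‖x t - xs‖ := norm_sub_rev _ _
    have hrev2 : ‖xs - x (t+1)‖ = ‖x (t+1) - xs‖ := norm_sub_rev _ _
    have hrev3 : ‖x (t+1) - x t‖ = ‖x t - x (t+1)‖ := norm_sub_rev _ _
    rw [hmax0] at hkey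
    rw [hrev1, hrev2, hrev3] at hkey
    rw [hrev1] at hIP1
    rw [hrev3] at hIP2
    simp only [hccdef]
    push_cast
    have heq : σ*((t:ℝ)-1)*‖x t - xs‖^2/2 = σ*(t:ℝ)/2*‖x t - xs‖^2 - σ/2*‖x t - xs‖^2 := by
      ring
    have heq2 : σ*((t:ℝ)+1-1)*‖x (t+1) - xs‖^2/2 = σ*(t:ℝ)/2*‖x (t+1) - xs‖^2 := by ring
    linarith [hkey, hIP1, hIP2, heq, heq2]
  -- per-step bound
  have per_t : ∀ t ∈ Finset.Icc 1 T,
      max (g t (x t)) 0 ≤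
        3*F*(d:ℝ)*D * w1 t + (9*F^2*(d:ℝ)^2/(2*σ)) * w2 t
        + (cc t - cc (t+1)) * w1 t
        + G^2/(4*β) + (12*F*(d:ℝ)*D*β/σ) * (1/(t:ℝ))
        + (cc t - cc (t+1)) * w3 t := by
    intro t ht
    obtain ⟨ht1, htT⟩ := Finset.mem_Icc.1 ht
    have hyX : x t ∈ X := hxmem t ht1 (by omega)
    have hy'X : x (t+1) ∈ X := (hupd t ht).1
    have htR : (1:ℝ) ≤ (t:ℝ) := by exact_mod_cast ht1
    have htR0 : (0:ℝ) < (t:ℝ) := by linarith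
    have hm := master t ht
    set dl : ℝ := ‖x t - x (t+1)‖ with hdldef
    have hdl0 : 0 ≤ dl := norm_nonneg _
    have hdlD : dl ≤ D := hD (x t) hyX (x (t+1)) hy'X
    set s' : ℝ := max (g t (x (t+1))) 0 with hs'def
    have hs'0 : 0 ≤ s' := le_max_right _ _
    -- lower bound on lam*γ
    have hLclb : (t:ℝ)^(1+ε) ≤ lam t * γ t := by
      have hpow : (t:ℝ)^(1+ε) ≤ (t:ℝ)^(c+(c+ε)) :=
        Real.rpow_le_rpow_of_exponent_le htR (by linarith)
      have hsplit : (t:ℝ)^(c+(c+ε)) = (t:ℝ)^c * (t:ℝ)^(c+ε) := Real.rpow_add htR0 _ _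
      have hγt : γ t = (t:ℝ)^(c+ε) := hγ t ht
      have hγpos : (0:ℝ) < (t:ℝ)^(c+ε) := Real.rpow_pos_of_pos htR0 _
      calc (t:ℝ)^(1+ε) ≤ (t:ℝ)^c * (t:ℝ)^(c+ε) := by rw [← hsplit]; exact hpow
        _ ≤ lam t * γ t := by
            rw [hγt]
            exact mul_le_mul_of_nonneg_right (hlam t ht) (le_of_lt hγpos)
    have hLc0 : (0:ℝ) ≤ lam t * γ t :=
      le_trans (le_of_lt (Real.rpow_pos_of_pos htR0 _)) hLclb
    -- AM-GM step
    have hamgm : 3*F*(d:ℝ)*dl - σ*(t:ℝ)/2*dl^2 ≤ 9*F^2*(d:ℝ)^2/(2*σ) * (1/(t:ℝ)) :=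
      amgm_aux F (d:ℝ) dl σ (t:ℝ) hσ htR0
    have hccs : lam t * γ t * s' ≤ 3*F*(d:ℝ)*D + 9*F^2*(d:ℝ)^2/(2*σ) * (1/(t:ℝ))
        + (cc t - cc (t+1)) := by linarith [hm, hamgm]
    have hu0 : (0:ℝ) ≤ 3*F*(d:ℝ)*D + 9*F^2*(d:ℝ)^2/(2*σ) * (1/(t:ℝ)) + (cc t - cc (t+1)) :=
      le_trans (mul_nonneg hLc0 hs'0) hccs
    have htpowpos : (0:ℝ) < (t:ℝ)^(1+ε) := Real.rpow_pos_of_pos htR0 _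
    -- divide by t^{1+ε}
    have hs'le : s' ≤ (3*F*(d:ℝ)*D + 9*F^2*(d:ℝ)^2/(2*σ) * (1/(t:ℝ))
        + (cc t - cc (t+1))) * w1 t := by
      have h1 : s' * (t:ℝ)^(1+ε) ≤ lam t * γ t * s' := by
        have := mul_le_mul_of_nonneg_left hLclb hs'0
        linarith [this]
      have h2 : s' * (t:ℝ)^(1+ε) ≤ 3*F*(d:ℝ)*D + 9*F^2*(d:ℝ)^2/(2*σ) * (1/(t:ℝ))
          + (cc t - cc (t+1)) := le_trans h1 hccs
      have hw1eq : w1 t = ((t:ℝ)^(1+ε))⁻¹ := by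
        simp only [hw1def]
        rw [← Real.rpow_neg (le_of_lt htR0)]
      rw [hw1eq, ← div_eq_mul_inv, le_div_iff₀ htpowpos]
      exact h2
    -- drift bound
    have hdrift : dl^2 ≤ 12*F*(d:ℝ)*D/(σ*(t:ℝ)) + (cc t - cc (t+1)) * (2/(σ*(t:ℝ))) := by
      have h6 : σ*(t:ℝ)/2 * dl^2 ≤ 6*F*(d:ℝ)*D + (cc t - cc (t+1)) := by
        have h7 : 3*F*(d:ℝ)*dl ≤ 3*F*(d:ℝ)*D := mul_le_mul_of_nonneg_left hdlD hFd
        have h8 : 0 ≤ lam t * γ t * s' := mul_nonneg hLc0 hs'0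
        linarith [hm, h7, h8]
      have h9 := mul_le_mul_of_nonneg_left h6 (show (0:ℝ) ≤ 2/(σ*(t:ℝ)) by positivity)
      have h10 : 2/(σ*(t:ℝ)) * (σ*(t:ℝ)/2 * dl^2) = dl^2 := by
        have hne : σ*(t:ℝ) ≠ 0 := by positivity
        field_simp
      rw [h10] at h9
      calc dl^2 ≤ 2/(σ*(t:ℝ)) * (6*F*(d:ℝ)*D + (cc t - cc (t+1))) := h9
        _ = 12*F*(d:ℝ)*D/(σ*(t:ℝ)) + (cc t - cc (t+1)) * (2/(σ*(t:ℝ))) := by ring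
    -- Lipschitz step
    have hlips : max (g t (x t)) 0 ≤ s' + G * dl := by
      have h12 := hglip t ht (x t) hyX (x (t+1)) hy'X
      have h13 : g t (x t) ≤ g t (x (t+1)) + G * dl := by
        have h14 := le_abs_self (g t (x t) - g t (x (t+1)))
        simp only [hdldef]
        linarith [h12, h14]
      apply max_le
      · exact le_trans h13 (by gcongr; exact le_max_left _ _)
      · exact add_nonneg hs'0 (mul_nonneg (le_of_lt hG) hdl0)
    -- combine
    have hw2eq : w1 t * (1/(t:ℝ)) = w2 t := by
      simp only [hw1def, hw2def]
      rw [show -(2+ε) = -(1+ε) + (-1) by ring, Real.rpow_add htR0, Real.rpow_neg_one]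
      ring
    have hyoung := young_aux G dl β hβpos
    have hβdrift := mul_le_mul_of_nonneg_left hdrift (le_of_lt hβpos)
    have hexp2 : β * (12*F*(d:ℝ)*D/(σ*(t:ℝ)) + (cc t - cc (t+1)) * (2/(σ*(t:ℝ))))
        = (12*F*(d:ℝ)*D*β/σ) * (1/(t:ℝ)) + (cc t - cc (t+1)) * w3 t := by
      simp only [hw3def]; ring
    have hexp1 : (3*F*(d:ℝ)*D + 9*F^2*(d:ℝ)^2/(2*σ) * (1/(t:ℝ)) + (cc t - cc (t+1))) * w1 t
        = 3*F*(d:ℝ)*D * w1 t + (9*F^2*(d:ℝ)^2/(2*σ)) * (w1 t * (1/(t:ℝ)))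
          + (cc t - cc (t+1)) * w1 t := by ring
    rw [hw2eq] at hexp1
    linarith [hlips, hs'le, hyoung, hβdrift, hexp1.le, hexp1.ge, hexp2.le, hexp2.ge]
  -- ==== summation ====
  have sum1 := Finset.sum_le_sum per_t
  have hcard : (Finset.Icc 1 T).card = T := by rw [Nat.card_Icc]; omega
  have hw1sum : ∑ t ∈ Finset.Icc 1 T, w1 t ≤ 1 + 1/ε := by
    have h1 := sum_rpow_one_add T hT hε
    have h2 : 0 ≤ (1/ε) * (T:ℝ)^(-ε) := by positivity
    simp only [hw1def]
    linarith
  have hw2sum : ∑ t ∈ Finset.Icc 1 T, w2 t ≤ 3/2 * S := by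
    rcases eq_or_lt_of_le hT with h1|h1
    · rw [← h1]
      simp only [hw2def, Finset.Icc_self, Finset.sum_singleton, Nat.cast_one, Real.one_rpow]
      linarith [hS1]
    · have h2 := sum_rpow_two_add T hT hε
      have h3 : (2:ℝ) ≤ (T:ℝ) := by exact_mod_cast h1
      have hS43 : 4/3 ≤ S := by nlinarith [hS2, hS0, hL1, h3]
      have h4 : (0:ℝ) < 1/(T:ℝ) := by positivity
      simp only [hw2def]
      linarith
  have habel1 : ∑ t ∈ Finset.Icc 1 T, (cc t - cc (t+1)) * w1 t ≤ 0 := by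
    apply abel_bound cc w1 T hT
    · intro t h1 h2
      simp only [hccdef]
      have h3 : (1:ℝ) ≤ (t:ℝ) := by exact_mod_cast h1
      have h4 : (0:ℝ) ≤ ‖x t - xs‖^2 := sq_nonneg _
      have h5 : (0:ℝ) ≤ σ * ((t:ℝ) - 1) := mul_nonneg (le_of_lt hσ) (by linarith)
      positivity
    · simp only [hccdef]; norm_num
    · intro t h1 h2
      simp only [hw1def]
      have h3 : (0:ℝ) < (t:ℝ) := by exact_mod_cast h1
      push_cast
      exact Real.rpow_le_rpow_of_nonpos h3 (by linarith) (by linarith)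
    · simp only [hw1def]
      exact Real.rpow_nonneg (Nat.cast_nonneg T) _
  have habel2 : ∑ t ∈ Finset.Icc 1 T, (cc t - cc (t+1)) * w3 t ≤ 0 := by
    apply abel_bound cc w3 T hT
    · intro t h1 h2
      simp only [hccdef]
      have h3 : (1:ℝ) ≤ (t:ℝ) := by exact_mod_cast h1
      have h4 : (0:ℝ) ≤ ‖x t - xs‖^2 := sq_nonneg _
      have h5 : (0:ℝ) ≤ σ * ((t:ℝ) - 1) := mul_nonneg (le_of_lt hσ) (by linarith)
      positivity
    · simp only [hccdef]; norm_num
    · intro t h1 h2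
      simp only [hw3def]
      have h3 : (0:ℝ) < (t:ℝ) := by exact_mod_cast h1
      push_cast
      gcongr
      linarith
    · simp only [hw3def]
      positivity
  have hharm : ∑ t ∈ Finset.Icc 1 T, (1:ℝ)/(t:ℝ) ≤ L := by
    simp only [hLdef]
    exact harmonic_le_log T hT
  have hsplit : ∑ t ∈ Finset.Icc 1 T, (3*F*(d:ℝ)*D * w1 t
        + (9*F^2*(d:ℝ)^2/(2*σ)) * w2 t + (cc t - cc (t+1)) * w1 t
        + G^2/(4*β) + (12*F*(d:ℝ)*D*β/σ) * (1/(t:ℝ)) + (cc t - cc (t+1)) * w3 t)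
      = 3*F*(d:ℝ)*D * (∑ t ∈ Finset.Icc 1 T, w1 t)
        + (9*F^2*(d:ℝ)^2/(2*σ)) * (∑ t ∈ Finset.Icc 1 T, w2 t)
        + (∑ t ∈ Finset.Icc 1 T, (cc t - cc (t+1)) * w1 t)
        + (T:ℝ) * (G^2/(4*β))
        + (12*F*(d:ℝ)*D*β/σ) * (∑ t ∈ Finset.Icc 1 T, 1/(t:ℝ))
        + (∑ t ∈ Finset.Icc 1 T, (cc t - cc (t+1)) * w3 t) := by
    rw [Finset.sum_add_distrib, Finset.sum_add_distrib, Finset.sum_add_distrib,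
      Finset.sum_add_distrib, Finset.sum_add_distrib, ← Finset.mul_sum, ← Finset.mul_sum,
      ← Finset.mul_sum, Finset.sum_const, hcard, nsmul_eq_mul]
  rw [hsplit] at sum1
  have hFdD : (0:ℝ) ≤ 3*F*(d:ℝ)*D := mul_nonneg hFd hD0
  have hco2 : (0:ℝ) ≤ 9*F^2*(d:ℝ)^2/(2*σ) := by positivity
  have hco3 : (0:ℝ) ≤ 12*F*(d:ℝ)*D*β/σ := by positivity
  have m1 := mul_le_mul_of_nonneg_left hw1sum hFdD
  have m2 := mul_le_mul_of_nonneg_left hw2sum hco2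
  have m3 := mul_le_mul_of_nonneg_left hharm hco3
  have hTβ : (T:ℝ)*(G^2/(4*β)) = G^2/4 * S := by
    rw [← hβS]; field_simp
  have hβLS : (12*F*(d:ℝ)*D*β/σ)*L = 12*F*(d:ℝ)*D/σ * S := by
    rw [← hβL]; field_simp
  have hfin1 : 3*F*(d:ℝ)*D*(1+1/ε) ≤ 3*F*(d:ℝ)*D*(1+1/ε)*S :=
    le_mul_of_one_le_right (by positivity) hS1
  have hrhs : (27 * F ^ 2 * (d : ℝ) ^ 2 / (4 * σ) + G ^ 2 / 4
        + 3 * F * (d : ℝ) * D * (1 + 1 / ε + 4 / σ) + D ^ 2) * S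
      = 27*F^2*(d:ℝ)^2/(4*σ)*S + G^2/4*S + 3*F*(d:ℝ)*D*(1+1/ε)*S
        + 12*F*(d:ℝ)*D/σ*S + D^2*S := by ring
  have hD2S : (0:ℝ) ≤ D^2*S := mul_nonneg (sq_nonneg D) hS0
  have h2732 : (9*F^2*(d:ℝ)^2/(2*σ)) * (3/2*S) = 27*F^2*(d:ℝ)^2/(4*σ)*S := by ring
  linarith [sum1, m1, m2, m3, habel1, habel2, hTβ.le, hTβ.ge, hβLS.le, hβLS.ge,
    hfin1, hrhs.le, hrhs.ge, hD2S, h2732.le, h2732.ge]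
end
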